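/- arXiv:1402.4749 — 9 statements merged into one kernel-verified Lean document; each statement's English description precedes it below -/
import Mathlib

section
/- Let Γ be a group. On the set of infinite virtually cyclic subgroups of Γ, the relation declaring two such subgroups H and K equivalent when H ∩ K is infinite is an equivalence relation. In particular (the nontrivial part, transitivity): if H, K, L are infinite virtually cyclic subgroups of Γ such that H ∩ K is infinite and K ∩ L is infinite, then H ∩ L is infinite. -/
/-- A group is virtually cyclic if it contains a cyclic subgroup of finite index. -/
def VirtuallyCyclic (G : Type*) [Group G] : Prop :=
  ∃ C : Subgroup G, IsCyclic C ∧ C.FiniteIndex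

open Subgroup

private lemma aux_infinite_of_finiteIndex {G : Type*} [Group G] [Infinite G]
    (H : Subgroup G) [H.FiniteIndex] : Infinite H := by
  by_contra h
  have hfin : Finite H := not_infinite_iff_finite.mp h
  have : Finite G :=
    Finite.of_equiv ((G ⧸ H) × H) (Subgroup.groupEquivQuotientProdSubgroup (s := H)).symm
  exact not_finite G

/-- A nontrivial subgroup of a cyclic group has finite index. -/
private lemma aux_cyclic_finiteIndex {C : Type*} [Group C] [IsCyclic C]
    (D : Subgroup C) (hD : D ≠ ⊥) : D.FiniteIndex := by
  obtain ⟨g, hg⟩ := IsCyclic.exists_generator (α := C)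
  obtain ⟨a, ha⟩ := (Subgroup.ne_bot_iff_exists_ne_one.mp hD)
  set c : C := (a : C) with hc
  have hcD : c ∈ D := a.2
  have hc1 : c ≠ 1 := fun h => ha (Subtype.ext h)
  obtain ⟨n, hn⟩ := hg c
  have hn0 : n ≠ 0 := by
    rintro rfl
    exact hc1 (by simpa using hn.symm)
  -- zpowers c is normal since C is generated by g (all elements commute)
  have hcomm : ∀ x y : C, x * y = y * x := by
    intro x y
    obtain ⟨a, ha⟩ := hg x
    obtain ⟨b, hb⟩ := hg y
    rw [← ha, ← hb, ← zpow_add, ← zpow_add, add_comm]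
  haveI hnorm : (zpowers (c : C)).Normal := ⟨by
    intro d hd x
    rwa [hcomm x d, mul_assoc, mul_inv_cancel, mul_one]⟩
  -- the quotient by zpowers c is finite
  haveI : Finite (C ⧸ zpowers (c : C)) := by
    set Q := C ⧸ zpowers (c : C)
    have hfin : IsOfFinOrder (QuotientGroup.mk g : Q) := by
      apply isOfFinOrder_iff_zpow_eq_one.mpr
      refine ⟨n, hn0, ?_⟩
      have : ((QuotientGroup.mk (g ^ n) : Q)) = 1 := by
        rw [QuotientGroup.eq_one_iff]
        simp only [] at hn
        rw [hn]
        exact mem_zpowers _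
      simpa using this
    have hsub : (Set.univ : Set Q) ⊆ (zpowers (QuotientGroup.mk g : Q) : Set Q) := by
      intro q _
      induction q using QuotientGroup.induction_on with
      | H x =>
        obtain ⟨m, hm⟩ := hg x
        exact ⟨m, by rw [← hm]; rfl⟩
    haveI : Finite (zpowers (QuotientGroup.mk g : Q)) := hfin.finite_zpowers
    exact Set.finite_univ_iff.mp
      (Set.Finite.subset ((zpowers (QuotientGroup.mk g : Q) : Set Q)).toFinite hsub)
  haveI : (zpowers (c : C)).FiniteIndex := Subgroup.finiteIndex_of_finite_quotient
  exact Subgroup.finiteIndex_of_le ((zpowers_le).mpr hcD)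

/-- In an infinite virtually cyclic group, every infinite subgroup has finite index. -/
private lemma aux_finiteIndex_of_infinite {G : Type*} [Group G] [Infinite G]
    (hvc : VirtuallyCyclic G) (A : Subgroup G) [hA : Infinite A] : A.FiniteIndex := by
  obtain ⟨C, hCcyc, hCfin⟩ := hvc
  haveI := hCfin
  haveI : Infinite C := aux_infinite_of_finiteIndex C
  have hrel : C.relIndex A ≠ 0 := fun h =>
    hCfin.index_ne_zero (Subgroup.index_eq_zero_of_relIndex_eq_zero h)
  haveI : (C.subgroupOf A).FiniteIndex := ⟨hrel⟩
  haveI hInfCA' : Infinite (C.subgroupOf A) := aux_infinite_of_finiteIndex _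
  have heq : (C ⊓ A).subgroupOf A = C.subgroupOf A := Subgroup.inf_subgroupOf_right ..
  haveI : Infinite ((C ⊓ A).subgroupOf A) := by rw [heq]; exact hInfCA'
  haveI : Infinite ↥(C ⊓ A) :=
    Infinite.of_injective _ (Subgroup.subgroupOfEquivOfLe (inf_le_right : C ⊓ A ≤ A)).injective
  haveI hDinf : Infinite ((C ⊓ A).subgroupOf C) := by
    have e := (Subgroup.subgroupOfEquivOfLe (inf_le_left : C ⊓ A ≤ C)).symm
    exact Infinite.of_injective _ e.injective
  haveI := hCcyc
  have hDbot : (C ⊓ A).subgroupOf C ≠ ⊥ := by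
    intro h
    rw [h] at hDinf
    exact not_finite (↥(⊥ : Subgroup C))
  haveI hDfin : ((C ⊓ A).subgroupOf C).FiniteIndex := aux_cyclic_finiteIndex _ hDbot
  have hidx : (C ⊓ A).index ≠ 0 := by
    rw [← Subgroup.relIndex_mul_index (inf_le_left : C ⊓ A ≤ C)]
    exact mul_ne_zero hDfin.index_ne_zero hCfin.index_ne_zero
  haveI : (C ⊓ A).FiniteIndex := ⟨hidx⟩
  exact Subgroup.finiteIndex_of_le (inf_le_right : C ⊓ A ≤ A)

/-- If `K` is infinite virtually cyclic and `H ⊓ K` is infinite, then `H` has finite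
relative index in `K`. -/
private lemma aux_relIndex_ne_zero {Γ : Type*} [Group Γ] (H K : Subgroup Γ)
    [Infinite K] (hvc : VirtuallyCyclic K) (h : Infinite ↥(H ⊓ K)) :
    H.relIndex K ≠ 0 := by
  haveI := h
  haveI : Infinite ((H ⊓ K).subgroupOf K) := by
    have e := (Subgroup.subgroupOfEquivOfLe (inf_le_right : H ⊓ K ≤ K)).symm
    exact Infinite.of_injective _ e.injective
  have := (aux_finiteIndex_of_infinite hvc ((H ⊓ K).subgroupOf K)).index_ne_zero
  rwa [← Subgroup.inf_relIndex_right H K]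

private lemma aux_infinite_of_relIndex_ne_zero {Γ : Type*} [Group Γ] (H K : Subgroup Γ)
    [Infinite K] (h : H.relIndex K ≠ 0) : Infinite ↥(H ⊓ K) := by
  have h' : ((H ⊓ K).subgroupOf K).index ≠ 0 := by
    rwa [show ((H ⊓ K).subgroupOf K).index = (H ⊓ K).relIndex K from rfl,
      Subgroup.inf_relIndex_right]
  haveI : ((H ⊓ K).subgroupOf K).FiniteIndex := ⟨h'⟩
  haveI : Infinite ((H ⊓ K).subgroupOf K) := aux_infinite_of_finiteIndex _
  exact Infinite.of_injective _
    (Subgroup.subgroupOfEquivOfLe (inf_le_right : H ⊓ K ≤ K)).injective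

private lemma aux_trans {Γ : Type*} [Group Γ] (H K L : Subgroup Γ)
    (_hH : Infinite H) (_hHvc : VirtuallyCyclic H)
    (hK : Infinite K) (hKvc : VirtuallyCyclic K)
    (hL : Infinite L) (hLvc : VirtuallyCyclic L)
    (h1 : Infinite ↥(H ⊓ K)) (h2 : Infinite ↥(K ⊓ L)) : Infinite ↥(H ⊓ L) := by
  haveI := hK; haveI := hL
  have hHK : H.relIndex K ≠ 0 := aux_relIndex_ne_zero H K hKvc h1
  have hKL : K.relIndex L ≠ 0 := aux_relIndex_ne_zero K L hLvc h2
  exact aux_infinite_of_relIndex_ne_zero H L (Subgroup.relIndex_ne_zero_trans hHK hKL)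

/-- On the set of infinite virtually cyclic subgroups of a group `Γ`, the relation
declaring `H` and `K` equivalent when `H ⊓ K` is infinite is an equivalence relation;
in particular it is transitive. -/
theorem equivalence_commensurability_infinite_virtuallyCyclic
    {Γ : Type*} [Group Γ] :
    Equivalence
      (fun H K : {H : Subgroup Γ // Infinite H ∧ VirtuallyCyclic H} =>
        Infinite ↥(H.val ⊓ K.val)) ∧
    ∀ H K L : Subgroup Γ,
      Infinite H → VirtuallyCyclic H →
      Infinite K → VirtuallyCyclic K →
      Infinite L → VirtuallyCyclic L →
      Infinite ↥(H ⊓ K) → Infinite ↥(K ⊓ L) → Infinite ↥(H ⊓ L) := by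
  constructor
  · refine ⟨?_, ?_, ?_⟩
    · intro H
      simpa [inf_idem] using H.2.1
    · intro H K h
      rwa [inf_comm] at h
    · intro H K L h1 h2
      exact aux_trans H.1 K.1 L.1 H.2.1 H.2.2 K.2.1 K.2.2 L.2.1 L.2.2 h1 h2
  · intro H K L hH hHvc hK hKvc hL hLvc h1 h2
    exact aux_trans H K L hH hHvc hK hKvc hL hLvc h1 h2
end

section
/- Let Γ be a group and let H be an infinite virtually cyclic subgroup of Γ. Then the set N_Γ[H] = {g ∈ Γ : H ∩ gHg⁻¹ is infinite} is a subgroup of Γ containing H. -/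
/-- The conjugate subgroup `gHg⁻¹`. -/
def conjSubgroup {Γ : Type*} [Group Γ] (g : Γ) (H : Subgroup Γ) : Subgroup Γ :=
  H.map (MulAut.conj g).toMonoidHom

section Aux

/-- If a subgroup has finite index and is finite, the whole group is finite. -/
private lemma aux_finite_of_subgroup {G : Type*} [Group G] (K : Subgroup G) (h : K.index ≠ 0)
    (hK : Finite K) : Finite G := by
  have : K.FiniteIndex := ⟨h⟩
  exact Finite.of_equiv ((G ⧸ K) × K) Subgroup.groupEquivQuotientProdSubgroup.symm

/-- A finite-index subgroup of an infinite group is infinite. -/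
private lemma aux_infinite_of_index {G : Type*} [Group G] [Infinite G] (K : Subgroup G)
    (h : K.index ≠ 0) : Infinite K := by
  by_contra hfin
  rw [not_infinite_iff_finite] at hfin
  have := aux_finite_of_subgroup K h hfin
  exact not_finite G

/-- An infinite subgroup of `ℤ` has finite index. -/
private lemma aux_int_index_ne_zero (K : AddSubgroup ℤ) (h : Infinite K) : K.index ≠ 0 := by
  obtain ⟨a, rfl⟩ := Int.subgroup_cyclic K
  rw [← AddSubgroup.zmultiples_eq_closure] at h ⊢
  rw [Int.index_zmultiples]
  rintro ha
  rw [Int.natAbs_eq_zero] at ha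
  subst ha
  have : Subsingleton (AddSubgroup.zmultiples (0:ℤ)) := by
    constructor
    rintro ⟨x, hx⟩ ⟨y, hy⟩
    simp only [AddSubgroup.mem_zmultiples_iff, smul_zero] at hx hy
    obtain ⟨_, hx⟩ := hx; obtain ⟨_, hy⟩ := hy
    subst hx; subst hy; rfl
  exact (not_subsingleton_iff_nontrivial.mpr inferInstance) this

/-- An infinite subgroup of an infinite cyclic group has finite index. -/
private lemma aux_cyclic_index_ne_zero {G : Type*} [Group G] [IsCyclic G] [Infinite G]
    (K : Subgroup G) (h : Infinite K) : K.index ≠ 0 := by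
  obtain ⟨g, hg⟩ := IsCyclic.exists_generator (α := G)
  have hord : ¬IsOfFinOrder g := by
    intro hfin
    have h1 : (Subgroup.zpowers g : Subgroup G) = ⊤ := by
      rw [Subgroup.eq_top_iff']; exact hg
    have : Finite (Subgroup.zpowers g) := hfin.finite_zpowers
    rw [h1] at this
    have : Finite G := Finite.of_equiv _ Subgroup.topEquiv.toEquiv
    exact not_finite G
  set f := zpowersHom G g with hf
  have hsurj : Function.Surjective f := by
    intro x
    obtain ⟨n, hn⟩ := hg x
    exact ⟨Multiplicative.ofAdd n, hn⟩
  have hinj : Function.Injective f := by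
    have := injective_zpow_iff_not_isOfFinOrder.mpr hord
    intro a b hab
    exact Multiplicative.toAdd.injective (this hab)
  set K' := K.comap f with hK'
  have hidx : K'.index = K.index := Subgroup.index_comap_of_surjective K hsurj
  have hKinf : Infinite K' := by
    have e : ↥K' ≃ ↥K := ((Equiv.ofBijective f ⟨hinj, hsurj⟩).subtypeEquiv
      (fun a => Iff.rfl))
    exact Equiv.infinite_iff e |>.mpr h
  rw [← hidx, ← Subgroup.index_toAddSubgroup]
  apply aux_int_index_ne_zero
  exact Equiv.infinite_iff ((Multiplicative.ofAdd).subtypeEquiv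
    (fun a => Iff.rfl)).symm |>.mp hKinf

/-- An infinite subgroup of an infinite virtually cyclic group has finite index. -/
private lemma aux_vc_index_ne_zero {G : Type*} [Group G] [Infinite G]
    (hvc : VirtuallyCyclic G) (K : Subgroup G) (h : Infinite K) : K.index ≠ 0 := by
  obtain ⟨C, hC, hCi⟩ := hvc
  have hCinf : Infinite C := aux_infinite_of_index C hCi.index_ne_zero
  haveI := hCi
  have hsub : Infinite (C.subgroupOf K) := by
    haveI : Infinite K := h
    exact aux_infinite_of_index _ (Subgroup.instFiniteIndex_subgroupOf C K).index_ne_zero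
  have hKC : Infinite ↥(K ⊓ C) := by
    apply Infinite.of_injective
      (fun x : ↥(C.subgroupOf K) => (⟨x.1.1, x.1.2, x.2⟩ : ↥(K ⊓ C)))
    intro a b hab
    simp only [Subtype.mk.injEq] at hab
    exact Subtype.ext (Subtype.ext (congrArg (fun x : ↥(K ⊓ C) => (x : G)) hab))
  haveI := hC
  have hD : Infinite ↥((K ⊓ C).subgroupOf C) := by
    apply Infinite.of_injective
      (fun x : ↥(K ⊓ C) => (⟨⟨x.1, x.2.2⟩, x.2⟩ : ↥((K ⊓ C).subgroupOf C)))
    intro a b hab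
    simp only [Subtype.mk.injEq] at hab
    exact Subtype.ext (congrArg (fun x => x.1.1) hab)
  have hDi : ((K ⊓ C).subgroupOf C).index ≠ 0 := aux_cyclic_index_ne_zero _ hD
  have hrel : (K ⊓ C).relIndex C ≠ 0 := hDi
  have hKCidx : (K ⊓ C).index ≠ 0 := by
    rw [← Subgroup.relIndex_mul_index (inf_le_right : K ⊓ C ≤ C)]
    exact mul_ne_zero hrel hCi.index_ne_zero
  intro hK0
  exact hKCidx (by
    have := Subgroup.index_dvd_of_le (inf_le_left : K ⊓ C ≤ K)
    rw [hK0] at this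
    exact eq_zero_of_zero_dvd this)

/-- Virtual cyclicity is invariant under group isomorphism. -/
private lemma aux_vc_of_mulEquiv {G G' : Type*} [Group G] [Group G'] (e : G ≃* G')
    (hvc : VirtuallyCyclic G) : VirtuallyCyclic G' := by
  obtain ⟨C, hC, hCi⟩ := hvc
  refine ⟨C.map e.toMonoidHom, ?_, ?_⟩
  · haveI := hC
    exact isCyclic_of_surjective _ (Subgroup.equivMapOfInjective C _ e.injective).surjective
  · constructor
    have h1 : (C.map e.toMonoidHom).comap e.toMonoidHom = C :=
      Subgroup.comap_map_eq_self_of_injective e.injective C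
    have h2 := Subgroup.index_comap_of_surjective (f := e.toMonoidHom) (C.map e.toMonoidHom) e.surjective
    rw [h1] at h2
    rw [← h2]
    exact hCi.index_ne_zero

end Aux

open scoped Pointwise

/-- For an infinite virtually cyclic subgroup `H` of `Γ`, the set
`N_Γ[H] = {g ∈ Γ : H ∩ gHg⁻¹ is infinite}` is a subgroup of `Γ` containing `H`. -/
theorem commensurator_is_subgroup_containing
    {Γ : Type*} [Group Γ] (H : Subgroup Γ)
    (hinf : Infinite H) (hvc : VirtuallyCyclic H) :
    ∃ N : Subgroup Γ,
      (∀ g : Γ, g ∈ N ↔ Infinite ↥(H ⊓ conjSubgroup g H)) ∧ H ≤ N := by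
  haveI := hinf
  refine ⟨Subgroup.Commensurable.commensurator H, ?_, ?_⟩
  · intro g
    rw [Subgroup.Commensurable.commensurator_mem_iff]
    have hKrfl : ConjAct.toConjAct g • H = conjSubgroup g H := rfl
    set K := conjSubgroup g H with hK
    have eHK : ↥H ≃* ↥K :=
      Subgroup.equivMapOfInjective H _ (MulAut.conj g).injective
    have hKinf : Infinite K := Equiv.infinite_iff eHK.toEquiv |>.mp hinf
    have hKvc : VirtuallyCyclic K := aux_vc_of_mulEquiv eHK hvc
    rw [hKrfl]
    constructor
    · rintro ⟨h1, -⟩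
      have h1' : (K.subgroupOf H).index ≠ 0 := h1
      have : Infinite (K.subgroupOf H) := aux_infinite_of_index _ h1'
      apply Infinite.of_injective
        (fun x : ↥(K.subgroupOf H) => (⟨x.1.1, x.1.2, x.2⟩ : ↥(H ⊓ K)))
      intro a b hab
      simp only [Subtype.mk.injEq] at hab
      exact Subtype.ext (Subtype.ext (congrArg (fun x : ↥(H ⊓ K) => (x : Γ)) hab))
    · intro hI
      constructor
      · have hinfH : Infinite ↥((H ⊓ K).subgroupOf H) := by
          apply Infinite.of_injective
            (fun x : ↥(H ⊓ K) => (⟨⟨x.1, x.2.1⟩, x.2⟩ : ↥((H ⊓ K).subgroupOf H)))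
          intro a b hab
          simp only [Subtype.mk.injEq] at hab
          exact Subtype.ext (congrArg (fun x => x.1.1) hab)
        have := aux_vc_index_ne_zero (G := ↥H) hvc _ hinfH
        have h2 : (H ⊓ K).relIndex H ≠ 0 := this
        rwa [Subgroup.inf_relIndex_left] at h2
      · have hinfK : Infinite ↥((H ⊓ K).subgroupOf K) := by
          apply Infinite.of_injective
            (fun x : ↥(H ⊓ K) => (⟨⟨x.1, x.2.2⟩, x.2⟩ : ↥((H ⊓ K).subgroupOf K)))
          intro a b hab
          simp only [Subtype.mk.injEq] at hab
          exact Subtype.ext (congrArg (fun x => x.1.1) hab)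
        haveI := hKinf
        have := aux_vc_index_ne_zero (G := ↥K) hKvc _ hinfK
        have h2 : (H ⊓ K).relIndex K ≠ 0 := this
        rwa [Subgroup.inf_relIndex_right] at h2
  · intro h hh
    rw [Subgroup.Commensurable.commensurator_mem_iff]
    have : ConjAct.toConjAct h • H = H := by
      have : ConjAct.toConjAct h • H = conjSubgroup h H := rfl
      rw [this]
      ext x
      simp only [conjSubgroup, Subgroup.mem_map, MulEquiv.coe_toMonoidHom,
        MulAut.conj_apply]
      constructor
      · rintro ⟨y, hy, rfl⟩
        exact mul_mem (mul_mem hh hy) (inv_mem hh)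
      · intro hx
        exact ⟨h⁻¹ * x * h, mul_mem (mul_mem (inv_mem hh) hx) hh, by group⟩
    rw [this]
end

section
/- Let Γ be a group and let H and K be infinite virtually cyclic subgroups of Γ such that H ∩ K is infinite. Then N_Γ[H] = N_Γ[K], i.e. for every g ∈ Γ, H ∩ gHg⁻¹ is infinite if and only if K ∩ gKg⁻¹ is infinite. -/
open Subgroup Pointwise

/-- In a group generated by `g`, the subgroup generated by `g ^ n` (with `n ≠ 0`)
has finite index. -/
lemma aux_zpowers_finiteIndex {G : Type*} [Group G] (g : G)
    (hg : ∀ x : G, x ∈ Subgroup.zpowers g) (n : ℤ) (hn : n ≠ 0) :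
    (Subgroup.zpowers (g ^ n)).FiniteIndex := by
  set P := Subgroup.zpowers (g ^ n) with hP
  haveI hnorm : P.Normal := by
    constructor
    intro x hx y
    obtain ⟨k, rfl⟩ := Subgroup.mem_zpowers_iff.mp hx
    obtain ⟨b, rfl⟩ := Subgroup.mem_zpowers_iff.mp (hg y)
    have : g ^ b * (g ^ n) ^ k * (g ^ b)⁻¹ = (g ^ n) ^ k := by group
    rw [this]
    exact Subgroup.zpow_mem _ (Subgroup.mem_zpowers _) k
  haveI hfin : Finite (G ⧸ P) := by
    have hx : IsOfFinOrder ((QuotientGroup.mk g : G ⧸ P)) := by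
      refine isOfFinOrder_iff_zpow_eq_one.mpr ⟨n, hn, ?_⟩
      have h1 : ((QuotientGroup.mk (g ^ n) : G ⧸ P)) = 1 :=
        (QuotientGroup.eq_one_iff _).mpr (Subgroup.mem_zpowers _)
      simpa using h1
    have hsub : (Set.univ : Set (G ⧸ P)) ⊆
        (Subgroup.zpowers ((QuotientGroup.mk g : G ⧸ P)) : Set (G ⧸ P)) := by
      intro q _
      induction q using QuotientGroup.induction_on with
      | H x =>
        obtain ⟨m, hm⟩ := Subgroup.mem_zpowers_iff.mp (hg x)
        have he : ((QuotientGroup.mk g : G ⧸ P)) ^ m = QuotientGroup.mk x := by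
          rw [← hm]; simp
        exact Subgroup.mem_zpowers_iff.mpr ⟨m, he⟩
    have hfu : (Set.univ : Set (G ⧸ P)).Finite := hx.finite_zpowers.subset hsub
    exact Set.finite_univ_iff.mp hfu
  exact ⟨Subgroup.index_ne_zero_of_finite⟩

/-- A finite-relative-index intersection with an infinite subgroup is infinite. -/
lemma aux_inf_infinite {Γ : Type*} [Group Γ] (A B : Subgroup Γ)
    (hB : Infinite B) (h : A.relIndex B ≠ 0) : Infinite ↥(A ⊓ B) := by
  by_contra hcon
  have hf : Finite ↥(A ⊓ B) := not_infinite_iff_finite.mp hcon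
  have hf2 : Finite ↥(A.subgroupOf B) := by
    rw [← Subgroup.inf_subgroupOf_right]
    exact Finite.of_equiv _ (Subgroup.subgroupOfEquivOfLe inf_le_right).symm.toEquiv
  have hcard := (A.subgroupOf B).card_mul_index
  have h0 : Nat.card ↥B = 0 := Nat.card_eq_zero_of_infinite
  rw [h0] at hcard
  rcases Nat.mul_eq_zero.mp hcard with h1 | h1
  · exact (Nat.card_pos (α := ↥(A.subgroupOf B))).ne' h1
  · exact h h1

/-- An infinite subgroup of an infinite virtually cyclic group has finite index. -/
lemma aux_key {G : Type*} [Group G] [Infinite G] (hvc : VirtuallyCyclic G)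
    (B : Subgroup G) (hB : Infinite B) : B.FiniteIndex := by
  obtain ⟨C, hCcyc, hCfi⟩ := hvc
  haveI := hCfi
  -- C is infinite
  haveI hCinf : Infinite C := by
    by_contra h
    haveI : Finite C := not_infinite_iff_finite.mp h
    have hcard := C.card_mul_index
    have h0 : Nat.card G = 0 := Nat.card_eq_zero_of_infinite
    rw [h0] at hcard
    rcases Nat.mul_eq_zero.mp hcard with h1 | h1
    · exact (Nat.card_pos (α := ↥C)).ne' h1
    · exact hCfi.index_ne_zero h1
  -- C ⊓ B is infinite
  have hrel : C.relIndex B ≠ 0 := (Subgroup.instFiniteIndex_subgroupOf C B).index_ne_zero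
  haveI hCBinf : Infinite ↥(C ⊓ B) := aux_inf_infinite C B hB hrel
  -- generator of C
  obtain ⟨c, hc⟩ := hCcyc.exists_generator
  -- a nontrivial element of C ⊓ B
  obtain ⟨b, hb1⟩ := exists_ne (1 : ↥(C ⊓ B))
  have hbC : (b : G) ∈ C := b.2.1
  have hbB : (b : G) ∈ B := b.2.2
  obtain ⟨n, hn⟩ := Subgroup.mem_zpowers_iff.mp (hc ⟨(b : G), hbC⟩)
  have hnz : n ≠ 0 := by
    rintro rfl
    apply hb1
    have h1 : (⟨(b : G), hbC⟩ : ↥C) = 1 := by rw [← hn, zpow_zero]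
    ext
    simpa using congrArg (Subtype.val : ↥C → G) h1
  have hcb : ((c : G)) ^ n = (b : G) := by
    have := congrArg (Subtype.val : C → G) hn
    simpa using this
  set P := Subgroup.zpowers ((c : G) ^ n) with hPdef
  have hPC : P ≤ C := by
    rw [hPdef, Subgroup.zpowers_le]
    exact C.zpow_mem c.2 n
  have hPB : P ≤ B := by
    rw [hPdef, Subgroup.zpowers_le, hcb]
    exact hbB
  -- P has finite index in C
  have hPrel : P.relIndex C ≠ 0 := by
    have hEq : P.subgroupOf C = Subgroup.zpowers (c ^ n) := by
      ext x
      simp only [Subgroup.mem_subgroupOf, hPdef, Subgroup.mem_zpowers_iff]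
      constructor
      · rintro ⟨k, hk⟩
        refine ⟨k, ?_⟩
        ext
        simpa using hk
      · rintro ⟨k, hk⟩
        refine ⟨k, ?_⟩
        have := congrArg (Subtype.val : C → G) hk
        simpa using this
    rw [Subgroup.relIndex, hEq]
    exact (aux_zpowers_finiteIndex c hc n hnz).index_ne_zero
  -- P has finite index in G
  have hPfi : P.index ≠ 0 := by
    have hmul := Subgroup.relIndex_mul_index hPC
    intro h0
    rw [h0] at hmul
    rcases Nat.mul_eq_zero.mp hmul with h1 | h1
    · exact hPrel h1
    · exact hCfi.index_ne_zero h1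
  exact ⟨fun h0 => hPfi (Nat.eq_zero_of_zero_dvd (h0 ▸ Subgroup.index_dvd_of_le hPB))⟩

/-- For infinite virtually cyclic subgroups, an infinite intersection is the same as
commensurability. -/
lemma aux_infinite_inf_iff {Γ : Type*} [Group Γ] (A B : Subgroup Γ)
    (hA : Infinite A) (hAvc : VirtuallyCyclic A) (hB : Infinite B) (hBvc : VirtuallyCyclic B) :
    Infinite ↥(A ⊓ B) ↔ Commensurable A B := by
  constructor
  · intro h
    have hrel : ∀ (X Y : Subgroup Γ), Infinite Y → VirtuallyCyclic Y →
        Infinite ↥(X ⊓ Y) → X.relIndex Y ≠ 0 := by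
      intro X Y hYinf hYvc hXY
      haveI := hYinf
      haveI := hXY
      have hsub : Infinite ↥(X.subgroupOf Y) := by
        rw [← Subgroup.inf_subgroupOf_right]
        exact Infinite.of_injective _
          (Subgroup.subgroupOfEquivOfLe (inf_le_right : X ⊓ Y ≤ Y)).symm.injective
      exact (aux_key hYvc (X.subgroupOf Y) hsub).index_ne_zero
    refine ⟨hrel A B hB hBvc h, hrel B A hA hAvc ?_⟩
    rw [inf_comm]; exact h
  · intro h
    exact aux_inf_infinite A B hB h.1

/-- Conjugation as a pointwise `ConjAct` action agrees with `conjSubgroup`. -/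
lemma aux_conj_smul {Γ : Type*} [Group Γ] (g : Γ) (H : Subgroup Γ) :
    (ConjAct.toConjAct g) • H = conjSubgroup g H := by
  ext x
  constructor
  · intro hx
    obtain ⟨y, hy, rfl⟩ := hx
    exact ⟨y, hy, by simp [ConjAct.smul_def]⟩
  · rintro ⟨y, hy, rfl⟩
    exact ⟨y, hy, by simp [ConjAct.smul_def]⟩

/-- The conjugation isomorphism onto `conjSubgroup g H`. -/
noncomputable def aux_conjEquiv {Γ : Type*} [Group Γ] (g : Γ) (H : Subgroup Γ) :
    ↥H ≃* ↥(conjSubgroup g H) :=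
  (MulAut.conj g).subgroupMap H

lemma aux_vc_congr {G G' : Type*} [Group G] [Group G'] (e : G ≃* G')
    (h : VirtuallyCyclic G) : VirtuallyCyclic G' := by
  obtain ⟨C, h1, h2⟩ := h
  refine ⟨C.map e.toMonoidHom, ?_, ?_⟩
  · exact isCyclic_of_surjective (e.subgroupMap C) (e.subgroupMap C).surjective
  · refine ⟨?_⟩
    have : (C.map e.toMonoidHom).index = C.index :=
      Subgroup.index_map_eq C e.surjective
        (by rw [(MonoidHom.ker_eq_bot_iff e.toMonoidHom).mpr e.injective]; exact bot_le)
    rw [this]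
    exact h2.index_ne_zero

/-- If `H` and `K` are infinite virtually cyclic subgroups of `Γ` with `H ∩ K` infinite,
then `N_Γ[H] = N_Γ[K]`: for every `g`, `H ∩ gHg⁻¹` is infinite iff `K ∩ gKg⁻¹` is. -/
theorem commensurator_eq_of_commensurable
    {Γ : Type*} [Group Γ] (H K : Subgroup Γ)
    (hHinf : Infinite H) (hHvc : VirtuallyCyclic H)
    (hKinf : Infinite K) (hKvc : VirtuallyCyclic K)
    (hHK : Infinite ↥(H ⊓ K)) :
    ∀ g : Γ, Infinite ↥(H ⊓ conjSubgroup g H) ↔ Infinite ↥(K ⊓ conjSubgroup g K) := by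
  intro g
  haveI := hHinf
  haveI := hKinf
  have hgHinf : Infinite ↥(conjSubgroup g H) :=
    Infinite.of_injective (aux_conjEquiv g H) (aux_conjEquiv g H).injective
  have hgKinf : Infinite ↥(conjSubgroup g K) :=
    Infinite.of_injective (aux_conjEquiv g K) (aux_conjEquiv g K).injective
  have hgHvc : VirtuallyCyclic ↥(conjSubgroup g H) := aux_vc_congr (aux_conjEquiv g H) hHvc
  have hgKvc : VirtuallyCyclic ↥(conjSubgroup g K) := aux_vc_congr (aux_conjEquiv g K) hKvc
  have hHKc : Commensurable H K :=
    (aux_infinite_inf_iff H K hHinf hHvc hKinf hKvc).mp hHK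
  have hconj : Commensurable (conjSubgroup g H) (conjSubgroup g K) := by
    rw [← aux_conj_smul g H, ← aux_conj_smul g K]
    exact (Commensurable.commensurable_conj (ConjAct.toConjAct g)).mp hHKc
  rw [aux_infinite_inf_iff H (conjSubgroup g H) hHinf hHvc hgHinf hgHvc,
    aux_infinite_inf_iff K (conjSubgroup g K) hKinf hKvc hgKinf hgKvc]
  constructor
  · intro h
    exact (hHKc.symm.trans h).trans hconj
  · intro h
    exact (hHKc.trans h).trans hconj.symm
end

section
/- Let G be a group and let A be a normal subgroup of G that is free abelian of finite rank. Let h ∈ A be an element of infinite order such that for every g ∈ G there exist nonzero integers n and m with g⁻¹hⁿg = hᵐ. Then the cyclic subgroup ⟨h⟩ generated by h is a normal subgroup of G. -/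
/-- Let `A` be a normal subgroup of `G` that is free abelian of finite rank, and let
`h ∈ A` have infinite order.  If for every `g ∈ G` there are nonzero integers `n, m`
with `g⁻¹hⁿg = hᵐ`, then the cyclic subgroup `⟨h⟩` is normal in `G`. -/
theorem zpowers_normal_of_commensurated
    {G : Type*} [Group G] (A : Subgroup G) (hA : A.Normal)
    (hfree : ∃ r : ℕ, Nonempty (A ≃* Multiplicative (Fin r → ℤ)))
    (h : G) (hmem : h ∈ A) (hord : ¬ IsOfFinOrder h)
    (hcomm : ∀ g : G, ∃ n m : ℤ, n ≠ 0 ∧ m ≠ 0 ∧ g⁻¹ * h ^ n * g = h ^ m) :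
    (Subgroup.zpowers h).Normal := by
  obtain ⟨r, ⟨e⟩⟩ := hfree
  -- elements of `A` commute
  have hAcomm : ∀ a b : A, a * b = b * a := fun a b =>
    e.injective (by rw [map_mul, map_mul, mul_comm])
  have hcommG : ∀ a ∈ A, ∀ b ∈ A, a * b = b * a := by
    intro a ha b hb
    exact congrArg Subtype.val (hAcomm ⟨a, ha⟩ ⟨b, hb⟩)
  -- `A` is torsion-free
  have htf : ∀ a ∈ A, ∀ k : ℤ, k ≠ 0 → a ^ k = 1 → a = 1 := by
    intro a ha k hk hak
    have h1 : (⟨a, ha⟩ : A) ^ k = 1 := by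
      apply Subtype.ext; simpa using hak
    have h2 : (e ⟨a, ha⟩) ^ k = 1 := by rw [← map_zpow, h1, map_one]
    have h3 : k • (Multiplicative.toAdd (e ⟨a, ha⟩)) = 0 := by
      rw [← toAdd_zpow, h2]; rfl
    rcases smul_eq_zero.mp h3 with hk' | hw
    · exact absurd hk' hk
    · have h5 : e ⟨a, ha⟩ = 1 := by
        have := congrArg Multiplicative.ofAdd hw
        simpa using this
      have h6 : (⟨a, ha⟩ : A) = 1 := e.injective (h5.trans (map_one e).symm)
      exact congrArg Subtype.val h6
  have hzinjh : ∀ i j : ℤ, h ^ i = h ^ j → i = j := by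
    intro i j hij
    by_contra hne
    apply hord
    rw [isOfFinOrder_iff_zpow_eq_one]
    exact ⟨i - j, sub_ne_zero.mpr hne, by rw [zpow_sub, hij, mul_inv_cancel]⟩
  -- the subgroup of elements commensurable with `h`
  let L : Subgroup G :=
    { carrier := {a | a ∈ A ∧ ∃ k : ℤ, k ≠ 0 ∧ a ^ k ∈ Subgroup.zpowers h}
      one_mem' := ⟨A.one_mem, 1, one_ne_zero, by simpa using Subgroup.one_mem (Subgroup.zpowers h)⟩
      mul_mem' := by
        rintro a b ⟨ha, k, hk, hak⟩ ⟨hb, l, hl, hbl⟩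
        refine ⟨A.mul_mem ha hb, k * l, mul_ne_zero hk hl, ?_⟩
        have hc : Commute a b := hcommG a ha b hb
        rw [hc.mul_zpow]
        have h1 : a ^ (k * l) ∈ Subgroup.zpowers h := by
          rw [zpow_mul]; exact Subgroup.zpow_mem _ hak l
        have h2 : b ^ (k * l) ∈ Subgroup.zpowers h := by
          rw [mul_comm k l, zpow_mul]; exact Subgroup.zpow_mem _ hbl k
        exact Subgroup.mul_mem _ h1 h2
      inv_mem' := by
        rintro a ⟨ha, k, hk, hak⟩
        exact ⟨A.inv_mem ha, k, hk, by rw [inv_zpow]; exact Subgroup.inv_mem _ hak⟩ }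
  have hLA : ∀ a ∈ L, a ∈ A := fun a ha => ha.1
  have hhL : h ∈ L := ⟨hmem, 1, one_ne_zero, by simpa using Subgroup.mem_zpowers h⟩
  -- `L` is finitely generated
  have hLfg : L.FG := by
    have hle : L ≤ A := fun a ha => ha.1
    let S₁ : Subgroup A := L.subgroupOf A
    let S₂ : Subgroup (Multiplicative (Fin r → ℤ)) := S₁.map (e : A →* _)
    let T : AddSubgroup (Fin r → ℤ) := AddSubgroup.toSubgroup.symm S₂
    have hT : T.FG := by
      have hfg : (AddSubgroup.toIntSubmodule T).FG := IsNoetherian.noetherian _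
      rwa [Submodule.fg_iff_addSubgroup_fg, AddSubgroup.toIntSubmodule_toAddSubgroup] at hfg
    have hS₂ : S₂.FG := by
      have := (AddSubgroup.fg_iff_mul_fg T).mp hT
      simpa [T] using this
    have h2 : Group.FG S₂ := (Group.fg_iff_subgroup_fg _).mpr hS₂
    have h1 : Group.FG S₁ :=
      Group.fg_of_surjective (f := (e.subgroupMap S₁).symm.toMonoidHom)
        (e.subgroupMap S₁).symm.surjective
    have h0 : Group.FG L :=
      Group.fg_of_surjective (f := (Subgroup.subgroupOfEquivOfLe hle).toMonoidHom)
        (Subgroup.subgroupOfEquivOfLe hle).surjective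
    exact (Group.fg_iff_subgroup_fg L).mp h0
  obtain ⟨S, hS⟩ := hLfg
  -- a uniform exponent `N`
  classical
  let kk : G → ℤ := fun a =>
    if hx : ∃ k : ℤ, k ≠ 0 ∧ a ^ k ∈ Subgroup.zpowers h then hx.choose else 1
  have hkk : ∀ a ∈ L, kk a ≠ 0 ∧ a ^ kk a ∈ Subgroup.zpowers h := by
    rintro a ⟨-, hx⟩
    simp only [kk, dif_pos hx]
    exact hx.choose_spec
  let N : ℤ := ∏ a ∈ S, kk a
  have hSL : ∀ a ∈ S, a ∈ L := by
    intro a haS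
    rw [← hS]
    exact Subgroup.subset_closure haS
  have hN0 : N ≠ 0 := Finset.prod_ne_zero_iff.mpr fun a haS => (hkk a (hSL a haS)).1
  -- all elements of `L` have `N`-th power in `⟨h⟩`
  have hLN : ∀ a ∈ L, a ^ N ∈ Subgroup.zpowers h := by
    let K : Subgroup G :=
      { carrier := {a | a ∈ A ∧ a ^ N ∈ Subgroup.zpowers h}
        one_mem' := ⟨A.one_mem, by simpa using Subgroup.one_mem (Subgroup.zpowers h)⟩
        mul_mem' := by
          rintro a b ⟨ha, hak⟩ ⟨hb, hbk⟩
          refine ⟨A.mul_mem ha hb, ?_⟩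
          have hc : Commute a b := hcommG a ha b hb
          rw [hc.mul_zpow]
          exact Subgroup.mul_mem _ hak hbk
        inv_mem' := by
          rintro a ⟨ha, hak⟩
          exact ⟨A.inv_mem ha, by rw [inv_zpow]; exact Subgroup.inv_mem _ hak⟩ }
    have hSK : ∀ a ∈ S, a ∈ K := by
      intro a haS
      obtain ⟨hk0, hkmem⟩ := hkk a (hSL a haS)
      obtain ⟨c, hc⟩ := (Finset.dvd_prod_of_mem kk haS : kk a ∣ N)
      refine ⟨hLA a (hSL a haS), ?_⟩
      have hc' : N = kk a * c := hc
      rw [hc', zpow_mul]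
      exact Subgroup.zpow_mem _ hkmem c
    intro a ha
    have : L ≤ K := by
      rw [← hS]
      exact Subgroup.closure_le K |>.mpr hSK
    exact (this ha).2
  -- build an injective homomorphism from `L` to `ℤ`
  have hmemz : ∀ a : L, ∃ i : ℤ, h ^ i = (a : G) ^ N := fun a =>
    Subgroup.mem_zpowers_iff.mp (hLN a a.2)
  let ex : L → ℤ := fun a => (hmemz a).choose
  have hex : ∀ a : L, h ^ ex a = (a : G) ^ N := fun a => (hmemz a).choose_spec
  let f : L →* Multiplicative ℤ :=
    { toFun := fun a => Multiplicative.ofAdd (ex a)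
      map_one' := by
        have : h ^ ex 1 = h ^ (0 : ℤ) := by
          rw [hex 1]; simp
        have := hzinjh _ _ this
        simpa [this]
      map_mul' := by
        intro a b
        have hcab : Commute (a : G) (b : G) :=
          hcommG a (hLA a a.2) b (hLA b b.2)
        have : h ^ ex (a * b) = h ^ (ex a + ex b) := by
          rw [hex (a * b), zpow_add, hex a, hex b]
          push_cast
          rw [hcab.mul_zpow]
        have := hzinjh _ _ this
        simp [this] }
  have hfinj : Function.Injective f := by
    intro a b hab
    have hxy : ex a = ex b := by simpa [f] using hab
    have hN : (a : G) ^ N = (b : G) ^ N := by rw [← hex a, ← hex b, hxy]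
    have hcab0 : Commute (a : G) (b : G) := hcommG a (hLA a a.2) b (hLA b b.2)
    have hcab : Commute (a : G) (b : G)⁻¹ := hcab0.inv_right
    have h1 : ((a : G) * (b : G)⁻¹) ^ N = 1 := by
      rw [hcab.mul_zpow, inv_zpow, hN, mul_inv_cancel]
    have h2 : (a : G) * (b : G)⁻¹ = 1 :=
      htf _ (A.mul_mem (hLA a a.2) (A.inv_mem (hLA b b.2))) N hN0 h1
    exact Subtype.ext (mul_inv_eq_one.mp h2)
  haveI : IsCyclic L := by
    have := Subgroup.isCyclic f.range
    exact isCyclic_of_surjective (MonoidHom.ofInjective hfinj).symm.toMonoidHom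
      (MonoidHom.ofInjective hfinj).symm.surjective
  obtain ⟨t, ht⟩ := IsCyclic.exists_generator (α := L)
  have hgen : ∀ a ∈ L, ∃ c : ℤ, a = (t : G) ^ c := by
    intro a ha
    obtain ⟨c, hc⟩ := Subgroup.mem_zpowers_iff.mp (ht ⟨a, ha⟩)
    exact ⟨c, by simpa using (congrArg Subtype.val hc).symm⟩
  -- conjugation preserves `L`
  have hconjL : ∀ g : G, ∀ a ∈ L, g⁻¹ * a * g ∈ L := by
    rintro g a ⟨haA, k, hk, hak⟩
    obtain ⟨n, m, hn, hm, hnm⟩ := hcomm g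
    constructor
    · have := hA.conj_mem a haA g⁻¹
      simpa using this
    · obtain ⟨i, hi⟩ := Subgroup.mem_zpowers_iff.mp hak
      refine ⟨k * n, mul_ne_zero hk hn, ?_⟩
      have hmap : ∀ x : G, ∀ j : ℤ, (g⁻¹ * x * g) ^ j = g⁻¹ * x ^ j * g := by
        intro x j
        have h' := map_zpow (MulAut.conj g⁻¹) x j
        have h'' : g⁻¹ * x ^ j * g = (g⁻¹ * x * g) ^ j := by
          simpa [MulAut.conj_apply] using h'
        exact h''.symm
      rw [hmap a (k * n), zpow_mul, ← hi, ← zpow_mul, mul_comm i n, zpow_mul, ← hmap, hnm]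
      exact Subgroup.zpow_mem _ (Subgroup.zpow_mem _ (Subgroup.mem_zpowers h) m) i
  -- conclusion
  have key : ∀ g : G, g⁻¹ * h * g ∈ Subgroup.zpowers h := by
    intro g
    obtain ⟨s, hs⟩ := hgen h hhL
    obtain ⟨c, hc⟩ := hgen _ (hconjL g (t : G) t.2)
    have hmap : ∀ x : G, ∀ j : ℤ, (g⁻¹ * x * g) ^ j = g⁻¹ * x ^ j * g := by
      intro x j
      have h' := map_zpow (MulAut.conj g⁻¹) x j
      have h'' : g⁻¹ * x ^ j * g = (g⁻¹ * x * g) ^ j := by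
        simpa [MulAut.conj_apply] using h'
      exact h''.symm
    have : g⁻¹ * h * g = h ^ c := by
      rw [hs, ← hmap, hc, ← zpow_mul, mul_comm c s, zpow_mul]
    rw [this]
    exact Subgroup.zpow_mem _ (Subgroup.mem_zpowers h) c
  constructor
  intro x hx g
  obtain ⟨j, hj⟩ := Subgroup.mem_zpowers_iff.mp hx
  rw [← hj]
  have h1 : g * h * g⁻¹ ∈ Subgroup.zpowers h := by
    have := key g⁻¹
    simpa using this
  obtain ⟨c, hc⟩ := Subgroup.mem_zpowers_iff.mp h1
  have : g * h ^ j * g⁻¹ = (g * h * g⁻¹) ^ j := by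
    have h' := map_zpow (MulAut.conj g) h j
    simpa [MulAut.conj_apply] using h'
  rw [this, ← hc, ← zpow_mul]
  exact Subgroup.zpow_mem _ (Subgroup.mem_zpowers h) (c * j)
end

section
/- Let A ∈ SL(3,ℤ) be a matrix of infinite order such that 1 is not an eigenvalue of A over ℂ (i.e. det(A − I) ≠ 0). Then every g ∈ SL(3,ℤ) that normalizes the cyclic subgroup ⟨A⟩ (i.e. g⟨A⟩g⁻¹ = ⟨A⟩) commutes with A; in other words, the normalizer of ⟨A⟩ in SL(3,ℤ) equals the centralizer of A in SL(3,ℤ). -/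
open Matrix

lemma det_sub_one_eq_trace_sub_trace_adjugate
    (A : Matrix (Fin 3) (Fin 3) ℤ) (hA : A.det = 1) :
    (A - 1).det = A.trace - A.adjugate.trace := by
  rw [Matrix.det_fin_three] at hA
  simp [Matrix.det_fin_three, Matrix.trace_fin_three, Matrix.adjugate_fin_three,
    Matrix.sub_apply, Matrix.one_fin_three, Matrix.vecHead, Matrix.vecTail, Function.comp]
  linear_combination hA

/-- Let `A ∈ SL(3,ℤ)` have infinite order and suppose `1` is not an eigenvalue of `A`
(i.e. `det (A - I) ≠ 0`).  Then every `g ∈ SL(3,ℤ)` normalizing `⟨A⟩` commutes with `A`;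
in other words the normalizer of `⟨A⟩` equals the centralizer of `A`. -/
theorem normalizer_eq_centralizer_of_no_fixed_eigenvalue
    (A : Matrix.SpecialLinearGroup (Fin 3) ℤ)
    (hord : ¬ IsOfFinOrder A)
    (h1 : (A.val - 1).det ≠ 0) :
    (∀ g : Matrix.SpecialLinearGroup (Fin 3) ℤ,
        g ∈ Subgroup.normalizer (Subgroup.zpowers A : Set (Matrix.SpecialLinearGroup (Fin 3) ℤ)) → g * A = A * g) ∧
      Subgroup.normalizer (Subgroup.zpowers A : Set (Matrix.SpecialLinearGroup (Fin 3) ℤ)) =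
        Subgroup.centralizer ({A} : Set (Matrix.SpecialLinearGroup (Fin 3) ℤ)) := by
  have inj : Function.Injective fun n : ℤ => A ^ n :=
    injective_zpow_iff_not_isOfFinOrder.mpr hord
  have key : ∀ g : Matrix.SpecialLinearGroup (Fin 3) ℤ,
      g ∈ Subgroup.normalizer (Subgroup.zpowers A : Set (Matrix.SpecialLinearGroup (Fin 3) ℤ)) → g * A = A * g := by
    intro g hg
    rw [Subgroup.mem_normalizer_iff] at hg
    obtain ⟨k, hk⟩ := (hg A).1 (Subgroup.mem_zpowers A)
    have hk' : A ^ k = g * A * g⁻¹ := hk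
    have hA' : g * (g⁻¹ * A * g) * g⁻¹ ∈ Subgroup.zpowers A := by
      have : g * (g⁻¹ * A * g) * g⁻¹ = A := by group
      rw [this]; exact Subgroup.mem_zpowers A
    obtain ⟨m, hm⟩ := (hg (g⁻¹ * A * g)).2 hA'
    have hm' : A ^ m = g⁻¹ * A * g := hm
    have hconj2 : (g⁻¹ * A * g) ^ k = g⁻¹ * A ^ k * g := by
      have := map_zpow (MulAut.conj g⁻¹) A k
      simpa [MulAut.conj_apply, inv_inv] using this.symm
    have hmk : A ^ (m * k) = A ^ (1 : ℤ) := by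
      rw [_root_.zpow_mul, hm', hconj2, hk', _root_.zpow_one]
      group
    have hmul : m * k = 1 := inj hmk
    have hk1 : k = 1 ∨ k = -1 := by
      rcases Int.isUnit_iff.mp (IsUnit.of_mul_eq_one (a := k) m (by linarith [mul_comm m k])) with h | h
      · exact Or.inl h
      · exact Or.inr h
    rcases hk1 with rfl | rfl
    · rw [_root_.zpow_one] at hk'
      conv_rhs => rw [hk']
      group
    · exfalso
      rw [_root_.zpow_neg_one] at hk'
      -- trace argument: A is conjugate to A⁻¹, so their traces agree
      have htr : (A.val).trace = ((A⁻¹ : Matrix.SpecialLinearGroup (Fin 3) ℤ).val).trace := by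
        have hval : ((g * A * g⁻¹ : Matrix.SpecialLinearGroup (Fin 3) ℤ).val)
            = g.val * A.val * ((g⁻¹ : Matrix.SpecialLinearGroup (Fin 3) ℤ).val) := by simp
        have h2 : ((g⁻¹ : Matrix.SpecialLinearGroup (Fin 3) ℤ).val) * g.val = 1 := by
          rw [Matrix.SpecialLinearGroup.coe_inv, Matrix.adjugate_mul, g.2, one_smul]
        calc (A.val).trace
            = ((g * A * g⁻¹ : Matrix.SpecialLinearGroup (Fin 3) ℤ).val).trace := by
              rw [hval, Matrix.trace_mul_comm, ← mul_assoc, h2, one_mul]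
          _ = ((A⁻¹ : Matrix.SpecialLinearGroup (Fin 3) ℤ).val).trace := by rw [← hk']
      rw [Matrix.SpecialLinearGroup.coe_inv] at htr
      apply h1
      rw [det_sub_one_eq_trace_sub_trace_adjugate A.val A.2, htr, sub_self]
  refine ⟨key, ?_⟩
  ext g
  rw [Subgroup.mem_centralizer_iff]
  constructor
  · intro hg x hx
    rw [Set.mem_singleton_iff] at hx
    subst hx
    exact (key g hg).symm
  · intro hg
    have hcomm : Commute g A := (hg A rfl).symm
    rw [Subgroup.mem_normalizer_iff]
    intro n
    constructor
    · rintro ⟨j, rfl⟩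
      have e : g * A ^ j * g⁻¹ = A ^ j := by
        rw [(hcomm.zpow_right j).eq]; group
      exact ⟨j, e.symm⟩
    · rintro ⟨j, hj⟩
      have hj' : g * n * g⁻¹ = A ^ j := hj.symm
      have e : g * A ^ j * g⁻¹ = A ^ j := by
        rw [(hcomm.zpow_right j).eq]; group
      have hn : g * n * g⁻¹ = g * A ^ j * g⁻¹ := hj'.trans e.symm
      have hn' : n = A ^ j := mul_left_cancel (mul_right_cancel hn)
      exact ⟨j, hn'.symm⟩
end

section
/- Let A ∈ SL(3,ℤ). Then every complex eigenvalue of A¹² that is a root of unity is equal to 1; that is, if z ∈ ℂ is a root of the characteristic polynomial of A¹² and zⁿ = 1 for some n ≥ 1, then z = 1. -/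
open Matrix Polynomial

lemma aux_mem_spectrum_iff_root_charpoly {m : Type*} [Fintype m] [DecidableEq m]
    {F : Type*} [Field F] (M : Matrix m m F) (μ : F) :
    μ ∈ spectrum F M ↔ M.charpoly.eval μ = 0 := by
  have hdet : M.charpoly.eval μ = (scalar m μ - M).det := by
    rw [Matrix.charpoly, eval_det, matPolyEquiv_charmatrix]
    simp
  have halg : (algebraMap F (Matrix m m F)) μ = scalar m μ := rfl
  rw [spectrum.mem_iff, Matrix.isUnit_iff_isUnit_det, isUnit_iff_ne_zero, not_not, hdet, halg]

lemma aux_dvd_twelve_of_totient_le_three {m : ℕ} (hm : 0 < m) (h : m.totient ≤ 3) :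
    m ∣ 12 := by
  have htpos : 0 < m.totient := Nat.totient_pos.mpr hm
  have key : ∀ p, m.factorization p ≤ (12 : ℕ).factorization p := by
    intro p
    by_cases hp : p.Prime
    · by_cases hpm : p ∣ m
      · have hdvd : p - 1 ∣ m.totient := by
          simpa [Nat.totient_prime hp] using Nat.totient_dvd_of_dvd hpm
        have hple : p ≤ 4 := by
          have := Nat.le_of_dvd htpos hdvd
          omega
        have h2 := hp.two_le
        interval_cases p
        · -- p = 2
          have h8 : ¬ ((2 : ℕ) ^ 3 ∣ m) := by
            intro h8
            have h1 : ((2:ℕ) ^ 3).totient ∣ m.totient := Nat.totient_dvd_of_dvd h8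
            have h2 : ((2:ℕ) ^ 3).totient = 4 := by decide
            rw [h2] at h1
            have := Nat.le_of_dvd htpos h1
            omega
          have hle2 : m.factorization 2 ≤ 2 := by
            by_contra hcon
            exact h8 ((Nat.Prime.pow_dvd_iff_le_factorization Nat.prime_two hm.ne').mpr
              (by omega))
          have h12 : 2 ≤ (12 : ℕ).factorization 2 :=
            (Nat.Prime.pow_dvd_iff_le_factorization Nat.prime_two (by norm_num)).mp
              (show (2:ℕ) ^ 2 ∣ 12 by norm_num)
          omega
        · -- p = 3
          have h9 : ¬ ((3 : ℕ) ^ 2 ∣ m) := by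
            intro h9
            have h1 : ((3:ℕ) ^ 2).totient ∣ m.totient := Nat.totient_dvd_of_dvd h9
            have h2 : ((3:ℕ) ^ 2).totient = 6 := by decide
            rw [h2] at h1
            have := Nat.le_of_dvd htpos h1
            omega
          have hle1 : m.factorization 3 ≤ 1 := by
            by_contra hcon
            exact h9 ((Nat.Prime.pow_dvd_iff_le_factorization Nat.prime_three hm.ne').mpr
              (by omega))
          have h12 : 1 ≤ (12 : ℕ).factorization 3 :=
            (Nat.Prime.pow_dvd_iff_le_factorization Nat.prime_three (by norm_num)).mp
              (show (3:ℕ) ^ 1 ∣ 12 by norm_num)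
          omega
        · -- p = 4, not prime
          exact absurd hp (by decide)
      · simp [Nat.factorization_eq_zero_of_not_dvd hpm]
    · simp [Nat.factorization_eq_zero_of_not_prime _ hp]
  exact (Nat.factorization_le_iff_dvd hm.ne' (by norm_num)).mp (Finsupp.le_def.mpr key)

set_option maxHeartbeats 1000000 in
/-- Every complex eigenvalue of `A¹²` (for `A ∈ SL(3,ℤ)`) that is a root of unity
equals `1`. -/
theorem eigenvalue_root_of_unity_of_pow_twelve
    (A : Matrix.SpecialLinearGroup (Fin 3) ℤ) (z : ℂ)
    (hz : Polynomial.aeval z ((A ^ 12).val.charpoly) = 0)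
    (n : ℕ) (hn : 1 ≤ n) (hroot : z ^ n = 1) :
    z = 1 := by
  set C : Matrix (Fin 3) (Fin 3) ℂ :=
    ((A : Matrix (Fin 3) (Fin 3) ℤ)).map (Int.castRingHom ℂ) with hCdef
  -- z is a root of the charpoly of C ^ 12
  have hpow : C ^ 12 = ((A ^ 12 : Matrix.SpecialLinearGroup (Fin 3) ℤ) :
      Matrix (Fin 3) (Fin 3) ℤ).map (Int.castRingHom ℂ) := by
    rw [hCdef]
    simp only [Matrix.SpecialLinearGroup.coe_pow]
    rw [← RingHom.mapMatrix_apply, ← RingHom.mapMatrix_apply, map_pow]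
  have hzC : (C ^ 12).charpoly.eval z = 0 := by
    rw [hpow, Matrix.charpoly_map]
    rwa [Polynomial.aeval_def, Polynomial.eval₂_eq_eval_map] at hz
  have hzspec : z ∈ spectrum ℂ (C ^ 12) :=
    (aux_mem_spectrum_iff_root_charpoly _ z).mpr hzC
  rw [spectrum.map_pow_of_pos C (by norm_num : (0:ℕ) < 12)] at hzspec
  obtain ⟨lam, hlammem, hlam12'⟩ := hzspec
  have hlam12 : lam ^ 12 = z := hlam12'
  -- lam is a root of the rational charpoly, which has degree 3
  set q : Polynomial ℚ :=
    (((A : Matrix (Fin 3) (Fin 3) ℤ)).map (Int.castRingHom ℚ)).charpoly with hqdef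
  have hqmap : q.map (algebraMap ℚ ℂ) = C.charpoly := by
    rw [hqdef, Matrix.charpoly_map, hCdef, Matrix.charpoly_map, Polynomial.map_map]
    congr 1
  have haq : Polynomial.aeval lam q = 0 := by
    rw [Polynomial.aeval_def, ← Polynomial.eval_map, hqmap]
    exact (aux_mem_spectrum_iff_root_charpoly C lam).mp hlammem
  -- lam is a root of unity
  have hfin : IsOfFinOrder lam := by
    refine isOfFinOrder_iff_pow_eq_one.mpr ⟨12 * n, by omega, ?_⟩
    rw [pow_mul, hlam12, hroot]
  set m : ℕ := orderOf lam with hmdef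
  have hmpos : 0 < m := hfin.orderOf_pos
  have hprim : IsPrimitiveRoot lam m := IsPrimitiveRoot.orderOf lam
  have hcyc : Polynomial.cyclotomic m ℚ = minpoly ℚ lam :=
    Polynomial.cyclotomic_eq_minpoly_rat hprim hmpos
  have hq0 : q ≠ 0 := (Matrix.charpoly_monic _).ne_zero
  have hdeg : (minpoly ℚ lam).natDegree ≤ q.natDegree :=
    Polynomial.natDegree_le_of_dvd (minpoly.dvd ℚ lam haq) hq0
  have hq3 : q.natDegree = 3 := by
    rw [hqdef, Matrix.charpoly_natDegree_eq_dim, Fintype.card_fin]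
  have htot : m.totient ≤ 3 := by
    have := hdeg
    rw [← hcyc, Polynomial.natDegree_cyclotomic, hq3] at this
    exact this
  have hm12 : m ∣ 12 := aux_dvd_twelve_of_totient_le_three hmpos htot
  have : lam ^ 12 = 1 := orderOf_dvd_iff_pow_eq_one.mp hm12
  rw [← hlam12, this]
end

section
/- Let A ∈ SL(3,ℤ) be the block matrix A = [[1, a, b],[0, M]] whose first column is (1,0,0)ᵗ, whose first row is (1, a, b), and whose lower-right 2×2 block is M ∈ M₂(ℤ) with det M = 1, and assume det(M − I₂) ≠ 0 (1 is not an eigenvalue of M). Then every B ∈ SL(3,ℤ) commuting with A has the block form B = [[ε, x, y],[0, N]] with ε ∈ {1,−1} and N ∈ GL(2,ℤ), and the map sending B to its lower-right 2×2 block N is an injective group homomorphism from the centralizer of A in SL(3,ℤ) to the centralizer of M in GL(2,ℤ). -/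
open Matrix

/-- Let `A ∈ SL(3,ℤ)` be the block matrix `[[1, a, b],[0, M]]` with lower-right `2×2`
block `M` of determinant `1`, and suppose `1` is not an eigenvalue of `M`
(`det (M - I) ≠ 0`).  Then every `B ∈ SL(3,ℤ)` commuting with `A` has block form
`[[±1, x, y],[0, N]]`, and sending `B` to its lower-right block `N` is an injective
group homomorphism from the centralizer of `A` in `SL(3,ℤ)` to the centralizer of `M`
in `GL(2,ℤ)`. -/
theorem centralizer_block_form_and_injection
    (A : Matrix.SpecialLinearGroup (Fin 3) ℤ)
    (M : Matrix (Fin 2) (Fin 2) ℤ) (hdetM : M.det = 1)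
    (hA00 : A.val 0 0 = 1)
    (hAcol : ∀ i : Fin 2, A.val i.succ 0 = 0)
    (hblock : ∀ i j : Fin 2, A.val i.succ j.succ = M i j)
    (hM1 : (M - 1).det ≠ 0) :
    (∀ B ∈ Subgroup.centralizer ({A} : Set (Matrix.SpecialLinearGroup (Fin 3) ℤ)),
        (∀ i : Fin 2, B.val i.succ 0 = 0) ∧ (B.val 0 0 = 1 ∨ B.val 0 0 = -1)) ∧
    ∃ f : ↥(Subgroup.centralizer ({A} : Set (Matrix.SpecialLinearGroup (Fin 3) ℤ))) →*
        GL (Fin 2) ℤ,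
      Function.Injective f ∧
      (∀ B, ((f B : GL (Fin 2) ℤ) : Matrix (Fin 2) (Fin 2) ℤ) =
          Matrix.of fun i j : Fin 2 => (B : Matrix.SpecialLinearGroup (Fin 3) ℤ).val i.succ j.succ) ∧
      (∀ B, ((f B : GL (Fin 2) ℤ) : Matrix (Fin 2) (Fin 2) ℤ) * M =
          M * ((f B : GL (Fin 2) ℤ) : Matrix (Fin 2) (Fin 2) ℤ)) := by
  have hA10 : A.val 1 0 = 0 := by simpa using hAcol 0
  have hA20 : A.val 2 0 = 0 := by simpa using hAcol 1
  have hA11 : A.val 1 1 = M 0 0 := by simpa using hblock 0 0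
  have hA12 : A.val 1 2 = M 0 1 := by simpa using hblock 0 1
  have hA21 : A.val 2 1 = M 1 0 := by simpa using hblock 1 0
  have hA22 : A.val 2 2 = M 1 1 := by simpa using hblock 1 1
  have hdM : (M 0 0 - 1) * (M 1 1 - 1) - M 0 1 * M 1 0 ≠ 0 := by
    intro h
    apply hM1
    rw [Matrix.det_fin_two]
    simp [Matrix.sub_apply, Matrix.one_apply]
    linarith
  -- key facts for any B commuting with A
  have key : ∀ B : Matrix.SpecialLinearGroup (Fin 3) ℤ, A * B = B * A →
      B.val 1 0 = 0 ∧ B.val 2 0 = 0 ∧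
      B.val 0 0 * (B.val 1 1 * B.val 2 2 - B.val 1 2 * B.val 2 1) = 1 ∧
      (M 0 0 * B.val 1 1 + M 0 1 * B.val 2 1 = B.val 1 1 * M 0 0 + B.val 1 2 * M 1 0) ∧
      (M 0 0 * B.val 1 2 + M 0 1 * B.val 2 2 = B.val 1 1 * M 0 1 + B.val 1 2 * M 1 1) ∧
      (M 1 0 * B.val 1 1 + M 1 1 * B.val 2 1 = B.val 2 1 * M 0 0 + B.val 2 2 * M 1 0) ∧
      (M 1 0 * B.val 1 2 + M 1 1 * B.val 2 2 = B.val 2 1 * M 0 1 + B.val 2 2 * M 1 1) ∧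
      (B.val 0 1 + A.val 0 1 * B.val 1 1 + A.val 0 2 * B.val 2 1
          = B.val 0 0 * A.val 0 1 + B.val 0 1 * M 0 0 + B.val 0 2 * M 1 0) ∧
      (B.val 0 2 + A.val 0 1 * B.val 1 2 + A.val 0 2 * B.val 2 2
          = B.val 0 0 * A.val 0 2 + B.val 0 1 * M 0 1 + B.val 0 2 * M 1 1) := by
    intro B hc
    have hmat : A.val * B.val = B.val * A.val := by
      have := congrArg (fun g : Matrix.SpecialLinearGroup (Fin 3) ℤ => g.val) hc
      simpa using this
    have entry : ∀ i j : Fin 3, (A.val * B.val) i j = (B.val * A.val) i j := by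
      intro i j; rw [hmat]
    have e10 := entry 1 0
    have e20 := entry 2 0
    simp only [Matrix.mul_apply, Fin.sum_univ_three, hA00, hA10, hA20, hA11, hA12, hA21,
      hA22] at e10 e20
    have hc1 : B.val 1 0 = 0 := by
      have h : ((M 0 0 - 1) * (M 1 1 - 1) - M 0 1 * M 1 0) * B.val 1 0 = 0 := by
        linear_combination (M 1 1 - 1) * e10 - M 0 1 * e20
      exact (mul_eq_zero.mp h).resolve_left hdM
    have hc2 : B.val 2 0 = 0 := by
      have h : ((M 0 0 - 1) * (M 1 1 - 1) - M 0 1 * M 1 0) * B.val 2 0 = 0 := by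
        linear_combination (M 0 0 - 1) * e20 - M 1 0 * e10
      exact (mul_eq_zero.mp h).resolve_left hdM
    have hdet : B.val.det = 1 := B.prop
    rw [Matrix.det_fin_three] at hdet
    rw [hc1, hc2] at hdet
    have e11 := entry 1 1
    have e12 := entry 1 2
    have e21 := entry 2 1
    have e22 := entry 2 2
    have e01 := entry 0 1
    have e02 := entry 0 2
    simp only [Matrix.mul_apply, Fin.sum_univ_three, hA00, hA10, hA20, hA11, hA12, hA21,
      hA22, hc1, hc2] at e11 e12 e21 e22 e01 e02
    refine ⟨hc1, hc2, by linear_combination hdet, by linear_combination e11,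
      by linear_combination e12, by linear_combination e21, by linear_combination e22,
      by linear_combination e01, by linear_combination e02⟩
  refine ⟨?_, ?_⟩
  · intro B hB
    obtain ⟨h1, h2, h3, -⟩ := key B (Subgroup.mem_centralizer_iff.mp hB A rfl)
    refine ⟨?_, Int.eq_one_or_neg_one_of_mul_eq_one h3⟩
    intro i
    fin_cases i
    · simpa using h1
    · simpa using h2
  · -- the lower-right block as a unit
    have hcomm : ∀ B : ↥(Subgroup.centralizer ({A} : Set (Matrix.SpecialLinearGroup (Fin 3) ℤ))),
        A * (B : Matrix.SpecialLinearGroup (Fin 3) ℤ) = (B : Matrix.SpecialLinearGroup (Fin 3) ℤ) * A :=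
      fun B => Subgroup.mem_centralizer_iff.mp B.prop A rfl
    have hunit : ∀ B : ↥(Subgroup.centralizer ({A} : Set (Matrix.SpecialLinearGroup (Fin 3) ℤ))),
        IsUnit (Matrix.of fun i j : Fin 2 =>
          (B : Matrix.SpecialLinearGroup (Fin 3) ℤ).val i.succ j.succ) := by
      intro B
      obtain ⟨h1, h2, h3, -⟩ := key B (hcomm B)
      rw [Matrix.isUnit_iff_isUnit_det]
      refine IsUnit.of_mul_eq_one (a := _) ((B : Matrix.SpecialLinearGroup (Fin 3) ℤ).val 0 0) ?_
      rw [Matrix.det_fin_two]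
      simp only [Matrix.of_apply, Fin.succ_zero_eq_one, Fin.succ_one_eq_two]
      linear_combination h3
    refine ⟨MonoidHom.mk' (fun B => (hunit B).unit) ?_, ?_, ?_, ?_⟩
    · intro B C
      refine Units.ext ?_
      simp only [IsUnit.unit_spec, Units.val_mul]
      obtain ⟨hB1, hB2, -⟩ := key B (hcomm B)
      ext i j
      fin_cases i <;> fin_cases j <;>
        simp [Matrix.mul_apply, Fin.sum_univ_three, Fin.sum_univ_two, hB1, hB2]
    · intro B C h
      have hN : (Matrix.of fun i j : Fin 2 =>
            (B : Matrix.SpecialLinearGroup (Fin 3) ℤ).val i.succ j.succ) =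
          (Matrix.of fun i j : Fin 2 =>
            (C : Matrix.SpecialLinearGroup (Fin 3) ℤ).val i.succ j.succ) := by
        have := congrArg Units.val h
        simpa using this
      have hNij : ∀ i j : Fin 2, (B : Matrix.SpecialLinearGroup (Fin 3) ℤ).val i.succ j.succ =
          (C : Matrix.SpecialLinearGroup (Fin 3) ℤ).val i.succ j.succ :=
        fun i j => congrFun (congrFun hN i) j
      have hN11 : (B : Matrix.SpecialLinearGroup (Fin 3) ℤ).val 1 1 =
          (C : Matrix.SpecialLinearGroup (Fin 3) ℤ).val 1 1 := by simpa using hNij 0 0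
      have hN12 : (B : Matrix.SpecialLinearGroup (Fin 3) ℤ).val 1 2 =
          (C : Matrix.SpecialLinearGroup (Fin 3) ℤ).val 1 2 := by simpa using hNij 0 1
      have hN21 : (B : Matrix.SpecialLinearGroup (Fin 3) ℤ).val 2 1 =
          (C : Matrix.SpecialLinearGroup (Fin 3) ℤ).val 2 1 := by simpa using hNij 1 0
      have hN22 : (B : Matrix.SpecialLinearGroup (Fin 3) ℤ).val 2 2 =
          (C : Matrix.SpecialLinearGroup (Fin 3) ℤ).val 2 2 := by simpa using hNij 1 1
      obtain ⟨hB1, hB2, hB3, -, -, -, -, eB1, eB2⟩ := key B (hcomm B)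
      obtain ⟨hC1, hC2, hC3, -, -, -, -, eC1, eC2⟩ := key C (hcomm C)
      simp only [← hN11, ← hN12, ← hN21, ← hN22] at hC3 eC1 eC2
      have hd0 : (B : Matrix.SpecialLinearGroup (Fin 3) ℤ).val 1 1 *
          (B : Matrix.SpecialLinearGroup (Fin 3) ℤ).val 2 2 -
          (B : Matrix.SpecialLinearGroup (Fin 3) ℤ).val 1 2 *
          (B : Matrix.SpecialLinearGroup (Fin 3) ℤ).val 2 1 ≠ 0 := by
        intro h0
        rw [h0, mul_zero] at hB3
        exact one_ne_zero hB3.symm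
      have hε : (B : Matrix.SpecialLinearGroup (Fin 3) ℤ).val 0 0 =
          (C : Matrix.SpecialLinearGroup (Fin 3) ℤ).val 0 0 := by
        have := hB3.trans hC3.symm
        exact mul_right_cancel₀ hd0 this
      simp only [← hε] at eC1 eC2
      have hu : (B : Matrix.SpecialLinearGroup (Fin 3) ℤ).val 0 1 =
          (C : Matrix.SpecialLinearGroup (Fin 3) ℤ).val 0 1 := by
        have h : ((M 0 0 - 1) * (M 1 1 - 1) - M 0 1 * M 1 0) *
            ((B : Matrix.SpecialLinearGroup (Fin 3) ℤ).val 0 1 -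
             (C : Matrix.SpecialLinearGroup (Fin 3) ℤ).val 0 1) = 0 := by
          linear_combination (1 - M 1 1) * eB1 - (1 - M 1 1) * eC1 + M 1 0 * eB2 - M 1 0 * eC2
        have := (mul_eq_zero.mp h).resolve_left hdM
        linarith
      have hw : (B : Matrix.SpecialLinearGroup (Fin 3) ℤ).val 0 2 =
          (C : Matrix.SpecialLinearGroup (Fin 3) ℤ).val 0 2 := by
        have h : ((M 0 0 - 1) * (M 1 1 - 1) - M 0 1 * M 1 0) *
            ((B : Matrix.SpecialLinearGroup (Fin 3) ℤ).val 0 2 -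
             (C : Matrix.SpecialLinearGroup (Fin 3) ℤ).val 0 2) = 0 := by
          linear_combination M 0 1 * eB1 - M 0 1 * eC1 + (1 - M 0 0) * eB2 - (1 - M 0 0) * eC2
        have := (mul_eq_zero.mp h).resolve_left hdM
        linarith
      refine Subtype.ext (Subtype.ext (Matrix.ext fun i j => ?_))
      fin_cases i <;> fin_cases j
      · exact hε
      · exact hu
      · exact hw
      · exact hB1.trans hC1.symm
      · exact hN11
      · exact hN12
      · exact hB2.trans hC2.symm
      · exact hN21
      · exact hN22
    · intro B
      exact (hunit B).unit_spec
    · intro B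
      obtain ⟨-, -, -, h4, h5, h6, h7, -, -⟩ := key B (hcomm B)
      have hval := (hunit B).unit_spec
      simp only [MonoidHom.mk'_apply, hval]
      rw [← Matrix.ext_iff]
      simp only [Fin.forall_fin_two, Matrix.mul_apply, Fin.sum_univ_two, Matrix.of_apply,
        Fin.succ_zero_eq_one, Fin.succ_one_eq_two]
      refine ⟨⟨by linarith, by linarith⟩, by linarith, by linarith⟩
end

section
/- Let M ∈ M₂(ℤ) with det M = 1 and |trace M| > 2. Then the centralizer of M in GL(2,ℤ) is isomorphic as a group to ℤ × ℤ/2ℤ. -/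
open Matrix

namespace CentHypAux

noncomputable def fE (p q l : ℝ) (A : Matrix (Fin 2) (Fin 2) ℤ) : ℝ :=
  ((A 0 0 : ℝ) * q - (A 0 1 : ℝ) * p + (A 0 1 : ℝ) * l) / q

lemma fE_mul (p q r s l : ℝ) (hq : q ≠ 0) (hdet : p * s - q * r = 1)
    (hl : l ^ 2 = (p + s) * l - 1) (A B : Matrix (Fin 2) (Fin 2) ℤ)
    (hB1 : (B 0 1 : ℝ) * r = (B 1 0 : ℝ) * q)
    (hB2 : q * ((B 0 0 : ℝ) - (B 1 1 : ℝ)) = (B 0 1 : ℝ) * (p - s)) :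
    fE p q l (A * B) = fE p q l A * fE p q l B := by
  have h00 : ((A * B) 0 0 : ℝ) = (A 0 0 : ℝ) * (B 0 0 : ℝ) + (A 0 1 : ℝ) * (B 1 0 : ℝ) := by
    rw [Matrix.mul_apply, Fin.sum_univ_two]; push_cast; ring
  have h01 : ((A * B) 0 1 : ℝ) = (A 0 0 : ℝ) * (B 0 1 : ℝ) + (A 0 1 : ℝ) * (B 1 1 : ℝ) := by
    rw [Matrix.mul_apply, Fin.sum_univ_two]; push_cast; ring
  have key : (((A * B) 0 0 : ℝ) * q - ((A * B) 0 1 : ℝ) * p + ((A * B) 0 1 : ℝ) * l) * q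
      = ((A 0 0 : ℝ) * q - (A 0 1 : ℝ) * p + (A 0 1 : ℝ) * l) *
        ((B 0 0 : ℝ) * q - (B 0 1 : ℝ) * p + (B 0 1 : ℝ) * l) := by
    rw [h00, h01]
    linear_combination (A 0 1 : ℝ) * (p - l) * hB2 - (A 0 1 : ℝ) * q * hB1
      - (A 0 1 : ℝ) * (B 0 1 : ℝ) * hdet - (A 0 1 : ℝ) * (B 0 1 : ℝ) * hl
  unfold fE
  rw [div_mul_div_comm, div_eq_div_iff hq (mul_ne_zero hq hq)]
  linear_combination q * key

lemma fE_det (p q r s l l' : ℝ) (hq : q ≠ 0) (hdet : p * s - q * r = 1)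
    (hsum : l + l' = p + s) (hprod : l * l' = 1) (A : Matrix (Fin 2) (Fin 2) ℤ)
    (hA1 : (A 0 1 : ℝ) * r = (A 1 0 : ℝ) * q)
    (hA2 : q * ((A 0 0 : ℝ) - (A 1 1 : ℝ)) = (A 0 1 : ℝ) * (p - s)) :
    fE p q l A * fE p q l' A = ((A.det : ℤ) : ℝ) := by
  have hd : ((A.det : ℤ) : ℝ) = (A 0 0 : ℝ) * (A 1 1 : ℝ) - (A 0 1 : ℝ) * (A 1 0 : ℝ) := by
    rw [Matrix.det_fin_two]; push_cast; ring
  unfold fE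
  rw [div_mul_div_comm, hd, div_eq_iff (mul_ne_zero hq hq)]
  linear_combination ((A 0 0 : ℝ) * q - (A 0 1 : ℝ) * p) * (A 0 1 : ℝ) * hsum
    + (A 0 1 : ℝ) ^ 2 * hprod - (A 0 1 : ℝ) ^ 2 * hdet
    + (A 0 0 : ℝ) * q * hA2 - (A 0 1 : ℝ) * q * hA1

end CentHypAux

set_option maxHeartbeats 3000000 in
open CentHypAux in
/-- If `M` is an integral `2×2` matrix of determinant `1` with `|trace M| > 2`, then the
centralizer of `M` in `GL(2,ℤ)` is isomorphic to `ℤ × ℤ/2ℤ`. -/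
theorem centralizer_hyperbolic_GL2Z
    (M : Matrix.SpecialLinearGroup (Fin 2) ℤ)
    (htr : |(M.val).trace| > 2) :
    Nonempty (↥(Subgroup.centralizer
        ({Matrix.SpecialLinearGroup.toGL M} : Set (GL (Fin 2) ℤ))) ≃*
      Multiplicative (ℤ × ZMod 2)) := by
  classical
  set cent := Subgroup.centralizer
      ({Matrix.SpecialLinearGroup.toGL M} : Set (GL (Fin 2) ℤ)) with hcent
  -- basic integer facts
  have hdet : M.val 0 0 * M.val 1 1 - M.val 0 1 * M.val 1 0 = 1 := by
    have h := M.prop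
    rwa [Matrix.det_fin_two] at h
  have htr2 : 2 < |M.val 0 0 + M.val 1 1| := by
    rwa [Matrix.trace_fin_two] at htr
  have hq : M.val 0 1 ≠ 0 := by
    intro h0
    rw [h0] at hdet
    have h1 : M.val 0 0 * M.val 1 1 = 1 := by linarith
    rcases Int.mul_eq_one_iff_eq_one_or_neg_one.mp h1 with ⟨ha, hb⟩ | ⟨ha, hb⟩ <;>
      rw [ha, hb] at htr2 <;> norm_num at htr2
  have hT9 : (9 : ℤ) ≤ (M.val 0 0 + M.val 1 1) ^ 2 := by
    have h3 : 3 ≤ |M.val 0 0 + M.val 1 1| := htr2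
    nlinarith [sq_abs (M.val 0 0 + M.val 1 1), abs_nonneg (M.val 0 0 + M.val 1 1)]
  -- real constants
  have hqR : (M.val 0 1 : ℝ) ≠ 0 := Int.cast_ne_zero.mpr hq
  have hdetR : (M.val 0 0 : ℝ) * (M.val 1 1 : ℝ)
      - (M.val 0 1 : ℝ) * (M.val 1 0 : ℝ) = 1 := by exact_mod_cast hdet
  have hT9R : (9 : ℝ) ≤ ((M.val 0 0 : ℝ) + (M.val 1 1 : ℝ)) ^ 2 := by exact_mod_cast hT9
  set ee : ℝ := Real.sqrt (((M.val 0 0 : ℝ) + (M.val 1 1 : ℝ)) ^ 2 - 4) with heedef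
  have he2 : ee ^ 2 = ((M.val 0 0 : ℝ) + (M.val 1 1 : ℝ)) ^ 2 - 4 :=
    Real.sq_sqrt (by linarith)
  have hee : 0 < ee := Real.sqrt_pos.mpr (by linarith)
  set lam : ℝ := (((M.val 0 0 : ℝ) + (M.val 1 1 : ℝ)) + ee) / 2 with hlamdef
  set lam' : ℝ := (((M.val 0 0 : ℝ) + (M.val 1 1 : ℝ)) - ee) / 2 with hlamdef'
  have hl : lam ^ 2 = ((M.val 0 0 : ℝ) + (M.val 1 1 : ℝ)) * lam - 1 := by
    rw [hlamdef]; linear_combination (1/4 : ℝ) * he2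
  have hl' : lam' ^ 2 = ((M.val 0 0 : ℝ) + (M.val 1 1 : ℝ)) * lam' - 1 := by
    rw [hlamdef']; linear_combination (1/4 : ℝ) * he2
  have hsum : lam + lam' = (M.val 0 0 : ℝ) + (M.val 1 1 : ℝ) := by
    rw [hlamdef, hlamdef']; ring
  have hprod : lam * lam' = 1 := by
    rw [hlamdef, hlamdef']; linear_combination (-1/4 : ℝ) * he2
  have hlamee : lam - lam' = ee := by rw [hlamdef, hlamdef']; ring
  -- membership and commuting relations
  have hMmem : Matrix.SpecialLinearGroup.toGL M ∈ cent := by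
    rw [hcent]
    exact Subgroup.mem_centralizer_iff.mpr (fun h hh => by
      rw [Set.mem_singleton_iff] at hh; rw [hh])
  have hcommGL : ∀ B : GL (Fin 2) ℤ, B ∈ cent →
      M.val * (B : Matrix (Fin 2) (Fin 2) ℤ) = (B : Matrix (Fin 2) (Fin 2) ℤ) * M.val := by
    intro B hB
    rw [hcent] at hB
    have h := Subgroup.mem_centralizer_iff.mp hB (Matrix.SpecialLinearGroup.toGL M)
      (Set.mem_singleton _)
    have h2 := congrArg Units.val h
    rw [Units.val_mul, Units.val_mul] at h2
    exact h2
  have hrel : ∀ B : GL (Fin 2) ℤ, B ∈ cent →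
      ((B : Matrix (Fin 2) (Fin 2) ℤ) 0 1 * M.val 1 0
          = (B : Matrix (Fin 2) (Fin 2) ℤ) 1 0 * M.val 0 1
        ∧ M.val 0 1 * ((B : Matrix (Fin 2) (Fin 2) ℤ) 0 0 - (B : Matrix (Fin 2) (Fin 2) ℤ) 1 1)
          = (B : Matrix (Fin 2) (Fin 2) ℤ) 0 1 * (M.val 0 0 - M.val 1 1)) := by
    intro B hB
    have h := hcommGL B hB
    have h00 := congrFun (congrFun h 0) 0
    have h01 := congrFun (congrFun h 0) 1
    simp only [Matrix.mul_apply, Fin.sum_univ_two] at h00 h01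
    exact ⟨by linear_combination -h00, by linear_combination -h01⟩
  have hrelR : ∀ B : GL (Fin 2) ℤ, B ∈ cent →
      (((B : Matrix (Fin 2) (Fin 2) ℤ) 0 1 : ℝ) * (M.val 1 0 : ℝ)
          = ((B : Matrix (Fin 2) (Fin 2) ℤ) 1 0 : ℝ) * (M.val 0 1 : ℝ)
        ∧ (M.val 0 1 : ℝ) * (((B : Matrix (Fin 2) (Fin 2) ℤ) 0 0 : ℝ)
            - ((B : Matrix (Fin 2) (Fin 2) ℤ) 1 1 : ℝ))
          = ((B : Matrix (Fin 2) (Fin 2) ℤ) 0 1 : ℝ) * ((M.val 0 0 : ℝ) - (M.val 1 1 : ℝ))) := by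
    intro B hB
    obtain ⟨h1, h2⟩ := hrel B hB
    exact ⟨by exact_mod_cast h1, by exact_mod_cast h2⟩
  -- the eigenvalue maps
  set Ff : GL (Fin 2) ℤ → ℝ :=
    fun B => fE (M.val 0 0 : ℝ) (M.val 0 1 : ℝ) lam ((B : Matrix (Fin 2) (Fin 2) ℤ)) with hFf
  set Ff' : GL (Fin 2) ℤ → ℝ :=
    fun B => fE (M.val 0 0 : ℝ) (M.val 0 1 : ℝ) lam' ((B : Matrix (Fin 2) (Fin 2) ℤ)) with hFf'
  have hdet_pm : ∀ B : GL (Fin 2) ℤ,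
      ((B : Matrix (Fin 2) (Fin 2) ℤ).det = 1 ∨ (B : Matrix (Fin 2) (Fin 2) ℤ).det = -1) := by
    intro B
    refine Int.isUnit_iff.mp (IsUnit.of_mul_eq_one ((B⁻¹ : GL (Fin 2) ℤ) : Matrix (Fin 2) (Fin 2) ℤ).det ?_)
    rw [← Matrix.det_mul, ← Units.val_mul, mul_inv_cancel, Units.val_one, Matrix.det_one]
  have hFdet : ∀ B : GL (Fin 2) ℤ, B ∈ cent →
      Ff B * Ff' B = (((B : Matrix (Fin 2) (Fin 2) ℤ).det : ℤ) : ℝ) := by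
    intro B hB
    obtain ⟨h1, h2⟩ := hrelR B hB
    exact fE_det (M.val 0 0 : ℝ) (M.val 0 1 : ℝ) (M.val 1 0 : ℝ) (M.val 1 1 : ℝ) lam lam'
      hqR hdetR hsum hprod _ h1 h2
  have habs : ∀ B : GL (Fin 2) ℤ, B ∈ cent → |Ff B| * |Ff' B| = 1 := by
    intro B hB
    rw [← abs_mul, hFdet B hB]
    rcases hdet_pm B with h | h <;> rw [h] <;> norm_num
  have hFne : ∀ B : GL (Fin 2) ℤ, B ∈ cent → Ff B ≠ 0 := by
    intro B hB h0
    have h := habs B hB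
    rw [h0] at h; simp at h
  have hFmul : ∀ A B : GL (Fin 2) ℤ, B ∈ cent → Ff (A * B) = Ff A * Ff B := by
    intro A B hB
    obtain ⟨h1, h2⟩ := hrelR B hB
    have h := fE_mul (M.val 0 0 : ℝ) (M.val 0 1 : ℝ) (M.val 1 0 : ℝ) (M.val 1 1 : ℝ) lam
      hqR hdetR hl ((A : Matrix (Fin 2) (Fin 2) ℤ)) ((B : Matrix (Fin 2) (Fin 2) ℤ)) h1 h2
    simp only [hFf]
    rw [← h, ← Units.val_mul]
  have hdiff : ∀ B : GL (Fin 2) ℤ, Ff B - Ff' B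
      = ((B : Matrix (Fin 2) (Fin 2) ℤ) 0 1 : ℝ) * ee / (M.val 0 1 : ℝ) := by
    intro B
    simp only [hFf, hFf', fE]
    rw [div_sub_div_same, div_eq_div_iff hqR hqR]
    linear_combination ((B : Matrix (Fin 2) (Fin 2) ℤ) 0 1 : ℝ) * (M.val 0 1 : ℝ) * hlamee
  have hF1 : Ff 1 = 1 := by
    simp only [hFf, fE, Units.val_one, Matrix.one_apply_eq, Matrix.one_apply_ne (by decide : (0 : Fin 2) ≠ 1)]
    push_cast
    field_simp
    ring
  set ψr : ↥cent → ℝ := fun X => Real.log |Ff (X : GL (Fin 2) ℤ)| with hψr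
  have hψadd : ∀ X Y : ↥cent, ψr (X * Y) = ψr X + ψr Y := by
    intro X Y
    simp only [hψr]
    have hXY : ((X * Y : ↥cent) : GL (Fin 2) ℤ) = (X : GL (Fin 2) ℤ) * (Y : GL (Fin 2) ℤ) := rfl
    rw [hXY, hFmul _ _ Y.prop, abs_mul,
      Real.log_mul (abs_ne_zero.mpr (hFne _ X.prop)) (abs_ne_zero.mpr (hFne _ Y.prop))]
  set φ : ↥cent →* Multiplicative ℝ :=
    MonoidHom.mk' (fun X => Multiplicative.ofAdd (ψr X)) (fun X Y => by
      show Multiplicative.ofAdd (ψr (X * Y))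
          = Multiplicative.ofAdd (ψr X) * Multiplicative.ofAdd (ψr Y)
      rw [hψadd X Y]; rfl) with hφ
  have hψone : ψr 1 = 0 := by
    simp only [hψr]
    have h1 : ((1 : ↥cent) : GL (Fin 2) ℤ) = 1 := rfl
    rw [h1, hF1]; simp
  have hψinv : ∀ X : ↥cent, ψr X⁻¹ = - ψr X := by
    intro X
    have h := hψadd X X⁻¹
    rw [mul_inv_cancel, hψone] at h
    linarith
  have hψzpow : ∀ (X : ↥cent) (n : ℤ), ψr (X ^ n) = n * ψr X := by
    intro X n
    have h := map_zpow φ X n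
    have h2 := congrArg Multiplicative.toAdd h
    rw [toAdd_zpow] at h2
    simpa [hφ, zsmul_eq_mul] using h2
  have hψpow : ∀ (X : ↥cent) (n : ℕ), ψr (X ^ n) = n * ψr X := by
    intro X n
    have h := map_pow φ X n
    have h2 := congrArg Multiplicative.toAdd h
    rw [toAdd_pow] at h2
    simpa [hφ, nsmul_eq_mul] using h2
  set H : AddSubgroup ℝ :=
    { carrier := Set.range ψr
      zero_mem' := ⟨1, hψone⟩
      add_mem' := by rintro a b ⟨X, rfl⟩ ⟨Y, rfl⟩; exact ⟨X * Y, hψadd X Y⟩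
      neg_mem' := by rintro a ⟨X, rfl⟩; exact ⟨X⁻¹, hψinv X⟩ } with hH
  have hfin : Set.Finite {x : ℝ | x ∈ H ∧ |x| ≤ 1} := by
    set C1 : ℝ := 2 * Real.exp 1 * |(M.val 0 1 : ℝ)| / ee with hC1
    set C2 : ℝ := Real.exp 1 * |(M.val 0 1 : ℝ)| + C1 * |lam| with hC2
    set N : ℤ := max ⌈C1⌉ ⌈C2⌉ with hN
    apply Set.Finite.subset (Set.Finite.image
      (fun mn : ℤ × ℤ => Real.log |(((mn.1 : ℤ) : ℝ) + ((mn.2 : ℤ) : ℝ) * lam) / (M.val 0 1 : ℝ)|)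
      (Set.finite_Icc (-N, -N) (N, N)))
    rintro x ⟨hxH, hx1⟩
    obtain ⟨X, rfl⟩ := hxH
    have hfpos : 0 < |Ff (X : GL (Fin 2) ℤ)| := abs_pos.mpr (hFne _ X.prop)
    have hprod1 : |Ff (X : GL (Fin 2) ℤ)| * |Ff' (X : GL (Fin 2) ℤ)| = 1 := habs _ X.prop
    have hlog_le : Real.log |Ff (X : GL (Fin 2) ℤ)| ≤ 1 := (abs_le.mp hx1).2
    have hlog_ge : -1 ≤ Real.log |Ff (X : GL (Fin 2) ℤ)| := (abs_le.mp hx1).1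
    have hE : |Ff (X : GL (Fin 2) ℤ)| ≤ Real.exp 1 := by
      rw [← Real.exp_log hfpos]; exact Real.exp_le_exp.mpr hlog_le
    have hE0 : Real.exp (-1) ≤ |Ff (X : GL (Fin 2) ℤ)| := by
      rw [← Real.exp_log hfpos]; exact Real.exp_le_exp.mpr hlog_ge
    have hE' : |Ff' (X : GL (Fin 2) ℤ)| ≤ Real.exp 1 := by
      have hf'eq : |Ff' (X : GL (Fin 2) ℤ)| = 1 / |Ff (X : GL (Fin 2) ℤ)| := by
        field_simp
        linarith [hprod1]
      rw [hf'eq, div_le_iff₀ hfpos]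
      calc (1:ℝ) = Real.exp 1 * Real.exp (-1) := by rw [← Real.exp_add]; norm_num
        _ ≤ Real.exp 1 * |Ff (X : GL (Fin 2) ℤ)| :=
            mul_le_mul_of_nonneg_left hE0 (Real.exp_pos 1).le
    set B : Matrix (Fin 2) (Fin 2) ℤ := ((X : GL (Fin 2) ℤ) : Matrix (Fin 2) (Fin 2) ℤ) with hBdef
    have hbR : ((B 0 1 : ℤ) : ℝ)
        = (Ff (X : GL (Fin 2) ℤ) - Ff' (X : GL (Fin 2) ℤ)) * (M.val 0 1 : ℝ) / ee := by
      rw [hdiff (X : GL (Fin 2) ℤ)]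
      field_simp
      rfl
    have hdiffabs : |Ff (X : GL (Fin 2) ℤ) - Ff' (X : GL (Fin 2) ℤ)| ≤ 2 * Real.exp 1 := by
      calc |Ff (X : GL (Fin 2) ℤ) - Ff' (X : GL (Fin 2) ℤ)|
          ≤ |Ff (X : GL (Fin 2) ℤ)| + |Ff' (X : GL (Fin 2) ℤ)| := abs_sub _ _
        _ ≤ 2 * Real.exp 1 := by linarith
    have hb : |((B 0 1 : ℤ) : ℝ)| ≤ C1 := by
      rw [hbR, abs_div, abs_mul, abs_of_pos hee, hC1]
      gcongr
    have hmR : ((B 0 0 * M.val 0 1 - B 0 1 * M.val 0 0 : ℤ) : ℝ)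
        = Ff (X : GL (Fin 2) ℤ) * (M.val 0 1 : ℝ) - ((B 0 1 : ℤ) : ℝ) * lam := by
      simp only [hFf, fE]
      field_simp
      all_goals push_cast
      all_goals ring
    have hm : |((B 0 0 * M.val 0 1 - B 0 1 * M.val 0 0 : ℤ) : ℝ)| ≤ C2 := by
      rw [hmR, hC2]
      calc |Ff (X : GL (Fin 2) ℤ) * (M.val 0 1 : ℝ) - ((B 0 1 : ℤ) : ℝ) * lam|
          ≤ |Ff (X : GL (Fin 2) ℤ) * (M.val 0 1 : ℝ)| + |((B 0 1 : ℤ) : ℝ) * lam| := abs_sub _ _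
        _ ≤ Real.exp 1 * |(M.val 0 1 : ℝ)| + C1 * |lam| := by
            rw [abs_mul, abs_mul]
            exact add_le_add (mul_le_mul_of_nonneg_right hE (abs_nonneg _))
              (mul_le_mul_of_nonneg_right hb (abs_nonneg _))
    have hkey : ∀ (k : ℤ) (c : ℝ), |(k : ℝ)| ≤ c → ⌈c⌉ ≤ N → -N ≤ k ∧ k ≤ N := by
      intro k c hk hc
      have h1 : (k : ℝ) ≤ (⌈c⌉ : ℝ) := le_trans (abs_le.mp hk).2 (Int.le_ceil c)
      have h2 : ((-k : ℤ) : ℝ) ≤ (⌈c⌉ : ℝ) := by push_cast; linarith [(abs_le.mp hk).1, Int.le_ceil c]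
      have h1' : k ≤ ⌈c⌉ := by exact_mod_cast h1
      have h2' : -k ≤ ⌈c⌉ := by exact_mod_cast h2
      omega
    obtain ⟨hm1, hm2⟩ := hkey _ _ hm (le_max_right _ _)
    obtain ⟨hb1, hb2⟩ := hkey _ _ hb (le_max_left _ _)
    have hval : Real.log |(((B 0 0 * M.val 0 1 - B 0 1 * M.val 0 0 : ℤ) : ℝ)
        + ((B 0 1 : ℤ) : ℝ) * lam) / (M.val 0 1 : ℝ)| = ψr X := by
      have heqF : (((B 0 0 * M.val 0 1 - B 0 1 * M.val 0 0 : ℤ) : ℝ)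
          + ((B 0 1 : ℤ) : ℝ) * lam) / (M.val 0 1 : ℝ) = Ff (X : GL (Fin 2) ℤ) := by
        simp only [hFf, fE]
        push_cast
        all_goals ring
      rw [heqF]
    exact ⟨(B 0 0 * M.val 0 1 - B 0 1 * M.val 0 0, B 0 1),
      Set.mem_Icc.mpr ⟨⟨hm1, hb1⟩, ⟨hm2, hb2⟩⟩, hval⟩
  have hker : ∀ X : ↥cent, ψr X = 0 →
      ((X : GL (Fin 2) ℤ) : Matrix (Fin 2) (Fin 2) ℤ) = 1
        ∨ ((X : GL (Fin 2) ℤ) : Matrix (Fin 2) (Fin 2) ℤ) = -1 := by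
    intro X hX
    simp only [hψr] at hX
    have hfne : Ff (X : GL (Fin 2) ℤ) ≠ 0 := hFne _ X.prop
    have habs1 : |Ff (X : GL (Fin 2) ℤ)| = 1 := by
      rcases Real.log_eq_zero.mp hX with h | h | h
      · exact absurd h (abs_ne_zero.mpr hfne)
      · exact h
      · linarith [abs_nonneg (Ff (X : GL (Fin 2) ℤ))]
    have habs1' : |Ff' (X : GL (Fin 2) ℤ)| = 1 := by
      have h := habs _ X.prop
      rw [habs1, one_mul] at h
      exact h
    rcases abs_eq_abs.mp (habs1.trans habs1'.symm) with heq | heq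
    · -- Ff = Ff' ⇒ ((X : GL (Fin 2) ℤ) : Matrix (Fin 2) (Fin 2) ℤ) 0 1 = 0 and X = ±1
      have hd := hdiff (X : GL (Fin 2) ℤ)
      rw [heq, sub_self] at hd
      have hb0 : ((X : GL (Fin 2) ℤ) : Matrix (Fin 2) (Fin 2) ℤ) 0 1 = 0 := by
        have h1 : ((((X : GL (Fin 2) ℤ) : Matrix (Fin 2) (Fin 2) ℤ) 0 1 : ℤ) : ℝ) = 0 := by
          by_contra hne
          exact (div_ne_zero (mul_ne_zero hne hee.ne') hqR) hd.symm
        exact_mod_cast h1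
      obtain ⟨hr1, hr2⟩ := hrel _ X.prop
      have hB10 : ((X : GL (Fin 2) ℤ) : Matrix (Fin 2) (Fin 2) ℤ) 1 0 = 0 := by
        rw [hb0] at hr1
        simpa [hq] using hr1.symm
      have hB0011 : ((X : GL (Fin 2) ℤ) : Matrix (Fin 2) (Fin 2) ℤ) 0 0 = ((X : GL (Fin 2) ℤ) : Matrix (Fin 2) (Fin 2) ℤ) 1 1 := by
        rw [hb0] at hr2
        simp at hr2
        rcases hr2 with h | h
        · exact absurd h hq
        · linarith
      rcases hdet_pm (X : GL (Fin 2) ℤ) with h | h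
      · rw [Matrix.det_fin_two] at h
        rw [hb0, hB0011] at h
        have h11 : ((X : GL (Fin 2) ℤ) : Matrix (Fin 2) (Fin 2) ℤ) 1 1 * ((X : GL (Fin 2) ℤ) : Matrix (Fin 2) (Fin 2) ℤ) 1 1 = 1 := by linarith
        rcases mul_self_eq_one_iff.mp h11 with h1 | h1
        · left
          have h00 : ((X : GL (Fin 2) ℤ) : Matrix (Fin 2) (Fin 2) ℤ) 0 0 = 1 := by rw [hB0011, h1]
          ext i j
          fin_cases i <;> fin_cases j <;>
            simp [Matrix.one_apply, h00, h1, hb0, hB10]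
        · right
          have h00 : ((X : GL (Fin 2) ℤ) : Matrix (Fin 2) (Fin 2) ℤ) 0 0 = -1 := by rw [hB0011, h1]
          ext i j
          fin_cases i <;> fin_cases j <;>
            simp [Matrix.neg_apply, Matrix.one_apply, h00, h1, hb0, hB10]
      · exfalso
        rw [Matrix.det_fin_two] at h
        rw [hb0, hB0011] at h
        nlinarith [sq_nonneg (((X : GL (Fin 2) ℤ) : Matrix (Fin 2) (Fin 2) ℤ) 1 1)]
    · -- Ff = -Ff' : impossible
      exfalso
      have hsum0 : Ff (X : GL (Fin 2) ℤ) - Ff' (X : GL (Fin 2) ℤ)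
          = 2 * Ff (X : GL (Fin 2) ℤ) := by
        rw [heq]; ring
      have hsq : (Ff (X : GL (Fin 2) ℤ)) ^ 2 = 1 := by
        rw [← sq_abs, habs1]; norm_num
      have h4 : (((((X : GL (Fin 2) ℤ) : Matrix (Fin 2) (Fin 2) ℤ) 0 1 : ℤ) : ℝ) * ee / (M.val 0 1 : ℝ)) ^ 2 = 4 := by
        rw [← hdiff (X : GL (Fin 2) ℤ), hsum0]
        linear_combination 4 * hsq
      have h5 : ((((X : GL (Fin 2) ℤ) : Matrix (Fin 2) (Fin 2) ℤ) 0 1 : ℤ) : ℝ) ^ 2 * ee ^ 2 = 4 * ((M.val 0 1 : ℝ)) ^ 2 := by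
        rw [div_pow, div_eq_iff (pow_ne_zero 2 hqR)] at h4
        linear_combination h4
      rw [he2] at h5
      have hint : (((X : GL (Fin 2) ℤ) : Matrix (Fin 2) (Fin 2) ℤ) 0 1) ^ 2 * ((M.val 0 0 + M.val 1 1) ^ 2 - 4) = 4 * (M.val 0 1) ^ 2 := by
        exact_mod_cast h5
      have hβ : ((X : GL (Fin 2) ℤ) : Matrix (Fin 2) (Fin 2) ℤ) 0 1 ≠ 0 := by
        intro h0
        have h6 : 4 * (M.val 0 1) ^ 2 = 0 := by rw [← hint, h0]; ring
        have h7 : (M.val 0 1) ^ 2 = 0 := by linarith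
        exact hq (pow_eq_zero_iff (by norm_num : (2:ℕ) ≠ 0) |>.mp h7)
      have hdvd : (((X : GL (Fin 2) ℤ) : Matrix (Fin 2) (Fin 2) ℤ) 0 1) ^ 2 ∣ (2 * M.val 0 1) ^ 2 :=
        ⟨(M.val 0 0 + M.val 1 1) ^ 2 - 4, by linear_combination -hint⟩
      have hdvd2 : ((X : GL (Fin 2) ℤ) : Matrix (Fin 2) (Fin 2) ℤ) 0 1 ∣ 2 * M.val 0 1 := (Int.pow_dvd_pow_iff (by norm_num : (2:ℕ) ≠ 0)).mp hdvd
      obtain ⟨c, hc⟩ := hdvd2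
      have hc2 : (M.val 0 0 + M.val 1 1) ^ 2 - 4 = c ^ 2 := by
        have h6 : (((X : GL (Fin 2) ℤ) : Matrix (Fin 2) (Fin 2) ℤ) 0 1) ^ 2 * ((M.val 0 0 + M.val 1 1) ^ 2 - 4) = (((X : GL (Fin 2) ℤ) : Matrix (Fin 2) (Fin 2) ℤ) 0 1) ^ 2 * c ^ 2 := by
          linear_combination hint + (2 * M.val 0 1 + ((X : GL (Fin 2) ℤ) : Matrix (Fin 2) (Fin 2) ℤ) 0 1 * c) * hc
        exact mul_left_cancel₀ (pow_ne_zero 2 hβ) h6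
      have h1 : c ^ 2 < (M.val 0 0 + M.val 1 1) ^ 2 := by nlinarith [hc2]
      have h2 : |c| < |M.val 0 0 + M.val 1 1| := by
        by_contra hcon
        push_neg at hcon
        nlinarith [pow_le_pow_left₀ (abs_nonneg (M.val 0 0 + M.val 1 1)) hcon 2,
          sq_abs c, sq_abs (M.val 0 0 + M.val 1 1)]
      have h3 : |c| + 1 ≤ |M.val 0 0 + M.val 1 1| := Int.lt_iff_add_one_le.mp h2
      have h4' : (|c| + 1) ^ 2 ≤ |M.val 0 0 + M.val 1 1| ^ 2 :=
        pow_le_pow_left₀ (by positivity) h3 2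
      have h5' : 2 * |c| ≤ 3 := by
        nlinarith [sq_abs c, sq_abs (M.val 0 0 + M.val 1 1)]
      have h6 : |c| ≤ 1 := by omega
      have h7 : c ^ 2 ≤ 1 := by nlinarith [sq_abs c, abs_nonneg c]
      nlinarith [hT9]
  -- the element -1
  have hnegmem : (-1 : GL (Fin 2) ℤ) ∈ cent := by
    rw [hcent]
    refine Subgroup.mem_centralizer_iff.mpr (fun h hh => ?_)
    rw [mul_neg_one, neg_one_mul]
  set s₀ : ↥cent := ⟨-1, hnegmem⟩ with hs₀def
  have hs₀sq : s₀ ^ 2 = 1 := by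
    apply Subtype.ext
    show ((-1 : GL (Fin 2) ℤ)) ^ 2 = 1
    exact neg_one_sq
  have hs₀pow : ∀ k : ℕ, s₀ ^ k = s₀ ^ (k % 2) := by
    intro k
    conv_lhs => rw [← Nat.div_add_mod k 2]
    rw [pow_add, pow_mul, hs₀sq, one_pow, one_mul]
  have hcentral : ∀ X : ↥cent, s₀ * X = X * s₀ := by
    intro X
    apply Subtype.ext
    show (-1 : GL (Fin 2) ℤ) * (X : GL (Fin 2) ℤ) = (X : GL (Fin 2) ℤ) * (-1)
    rw [neg_one_mul, mul_neg_one]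
  have hs₀mat : ((s₀ : GL (Fin 2) ℤ) : Matrix (Fin 2) (Fin 2) ℤ) = -1 := by
    show ((-1 : GL (Fin 2) ℤ) : Matrix (Fin 2) (Fin 2) ℤ) = -1
    simp
  have hFs : Ff (-1 : GL (Fin 2) ℤ) = -1 := by
    simp only [hFf, fE]
    rw [show ((-1 : GL (Fin 2) ℤ) : Matrix (Fin 2) (Fin 2) ℤ)
        = -(1 : Matrix (Fin 2) (Fin 2) ℤ) by simp]
    rw [Matrix.neg_apply, Matrix.neg_apply, Matrix.one_apply_eq,
      Matrix.one_apply_ne (by decide : (0 : Fin 2) ≠ 1)]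
    push_cast
    field_simp
    ring
  have hψs₀ : ψr s₀ = 0 := by
    simp only [hψr]
    rw [hFs]
    simp
  have hs₀ne : s₀ ≠ 1 := by
    intro h
    have h2 : ((s₀ : GL (Fin 2) ℤ) : Matrix (Fin 2) (Fin 2) ℤ) 0 0
        = ((1 : GL (Fin 2) ℤ) : Matrix (Fin 2) (Fin 2) ℤ) 0 0 :=
      congrArg (fun Y : ↥cent => ((Y : GL (Fin 2) ℤ) : Matrix (Fin 2) (Fin 2) ℤ) 0 0) h
    rw [hs₀mat] at h2
    simp [Matrix.neg_apply, Matrix.one_apply_eq] at h2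
  -- value at M itself
  have hFM : Ff (Matrix.SpecialLinearGroup.toGL M) = lam := by
    simp only [hFf, fE]
    show ((M.val 0 0 : ℝ) * (M.val 0 1 : ℝ) - (M.val 0 1 : ℝ) * (M.val 0 0 : ℝ)
        + (M.val 0 1 : ℝ) * lam) / (M.val 0 1 : ℝ) = lam
    field_simp
    ring
  have hψM : ψr ⟨Matrix.SpecialLinearGroup.toGL M, hMmem⟩ ≠ 0 := by
    simp only [hψr]
    rw [hFM]
    intro h0
    have hlam0 : lam ≠ 0 := fun h => by rw [h] at hprod; simp at hprod
    have hTval : ∀ v : ℤ, ((M.val 0 0 : ℝ) + (M.val 1 1 : ℝ)) = (v : ℝ)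
        → M.val 0 0 + M.val 1 1 = v := by
      intro v hv
      exact_mod_cast hv
    rcases Real.log_eq_zero.mp h0 with h | h | h
    · exact hlam0 (abs_eq_zero.mp h)
    · rcases (abs_eq (by norm_num : (0:ℝ) ≤ 1)).mp h with h1 | h1
      · have h2 : ((M.val 0 0 : ℝ) + (M.val 1 1 : ℝ)) = ((2 : ℤ) : ℝ) := by
          have h3 := hl
          rw [h1] at h3
          push_cast
          linarith
        have := hTval 2 h2
        rw [this] at htr2
        norm_num at htr2
      · have h2 : ((M.val 0 0 : ℝ) + (M.val 1 1 : ℝ)) = ((-2 : ℤ) : ℝ) := by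
          have h3 := hl
          rw [h1] at h3
          push_cast
          linarith
        have := hTval (-2) h2
        rw [this] at htr2
        norm_num at htr2
    · linarith [abs_nonneg lam]
  -- dense or cyclic
  rcases AddSubgroup.dense_or_cyclic H with hdense | ⟨a, ha⟩
  · exfalso
    have hPfin : Set.Finite {x : ℝ | x ∈ H ∧ x ∈ Set.Ioo (0:ℝ) 1} := by
      apply hfin.subset
      rintro x ⟨h1, h2⟩
      exact ⟨h1, abs_le.mpr ⟨by linarith [h2.1], le_of_lt h2.2⟩⟩
    obtain ⟨x₀, hx₀H, hx₀⟩ := hdense.exists_between (by norm_num : (0:ℝ) < 1)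
    obtain ⟨m, hmP, hmin⟩ := Set.exists_min_image _ id hPfin ⟨x₀, hx₀H, hx₀⟩
    obtain ⟨c, hcH, hc⟩ := hdense.exists_between hmP.2.1
    have hle := hmin c ⟨hcH, hc.1, lt_trans hc.2 hmP.2.2⟩
    simp only [id] at hle
    exact absurd hle (not_le.mpr hc.2)
  · have haH : a ∈ H := by rw [ha]; exact AddSubgroup.mem_closure_singleton_self a
    have ha0 : a ≠ 0 := by
      intro h0
      apply hψM
      have hmem : ψr ⟨Matrix.SpecialLinearGroup.toGL M, hMmem⟩ ∈ H :=
        ⟨⟨Matrix.SpecialLinearGroup.toGL M, hMmem⟩, rfl⟩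
      rw [ha, h0] at hmem
      obtain ⟨n, hn⟩ := AddSubgroup.mem_closure_singleton.mp hmem
      rw [smul_zero] at hn
      exact hn.symm
    obtain ⟨g, hg⟩ : ∃ g : ↥cent, ψr g = a := haH
    set χfun : ℤ × ZMod 2 → ↥cent := fun x => g ^ x.1 * s₀ ^ x.2.val with hχfun
    have hχadd : ∀ x y : ℤ × ZMod 2, χfun (x + y) = χfun x * χfun y := by
      rintro ⟨n, ε⟩ ⟨n', ε'⟩
      show g ^ (n + n') * s₀ ^ ((ε + ε').val) = g ^ n * s₀ ^ ε.val * (g ^ n' * s₀ ^ ε'.val)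
      have hco : Commute s₀ (g ^ n') := hcentral (g ^ n')
      have hx : g ^ n' * s₀ ^ ε.val = s₀ ^ ε.val * g ^ n' := ((hco.pow_left ε.val).eq).symm
      rw [ZMod.val_add, ← hs₀pow (ε.val + ε'.val), _root_.zpow_add, pow_add,
        mul_assoc, ← mul_assoc (g ^ n'), hx, mul_assoc (s₀ ^ ε.val), ← mul_assoc]
    set χ : Multiplicative (ℤ × ZMod 2) →* ↥cent :=
      MonoidHom.mk' (fun m => χfun m.toAdd) (fun m m' => hχadd m.toAdd m'.toAdd) with hχ
    have hψχ : ∀ (n : ℤ) (v : ℕ), ψr (g ^ n * s₀ ^ v) = (n : ℝ) * a := by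
      intro n v
      rw [hψadd, hψzpow, hψpow, hg, hψs₀]
      ring
    have hinj : Function.Injective χ := by
      refine (injective_iff_map_eq_one χ).mpr ?_
      intro m hm
      have hm' : g ^ m.toAdd.1 * s₀ ^ m.toAdd.2.val = 1 := hm
      have h1 : (m.toAdd.1 : ℝ) * a = 0 := by
        rw [← hψχ m.toAdd.1 m.toAdd.2.val, hm', hψone]
      have hn0 : m.toAdd.1 = 0 := by
        have h2 : (m.toAdd.1 : ℝ) = 0 := by
          rcases mul_eq_zero.mp h1 with h | h
          · exact h
          · exact absurd h ha0
        exact_mod_cast h2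
      have hs : s₀ ^ (m.toAdd.2.val) = 1 := by
        rw [hn0, zpow_zero, one_mul] at hm'
        exact hm'
      rcases (show ∀ z : ZMod 2, z = 0 ∨ z = 1 by decide) m.toAdd.2 with hε | hε
      · have hadd : m.toAdd = (0, (0 : ZMod 2)) := Prod.ext hn0 hε
        exact toAdd_eq_zero.mp (by rw [hadd]; rfl)
      · exfalso
        rw [hε, show ((1 : ZMod 2)).val = 1 by decide, pow_one] at hs
        exact hs₀ne hs
    have hsurj : Function.Surjective χ := by
      intro X
      have hmem : ψr X ∈ H := ⟨X, rfl⟩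
      rw [ha] at hmem
      obtain ⟨n, hn⟩ := AddSubgroup.mem_closure_singleton.mp hmem
      rw [zsmul_eq_mul] at hn
      have hY : ψr (X * (g ^ n)⁻¹) = 0 := by
        rw [hψadd, hψinv, hψzpow, hg]
        linarith
      rcases hker _ hY with h | h
      · refine ⟨Multiplicative.ofAdd (n, (0 : ZMod 2)), ?_⟩
        have hY1 : X * (g ^ n)⁻¹ = 1 := by
          apply Subtype.ext; apply Units.ext
          exact h
        have hXg : X = g ^ n := mul_inv_eq_one.mp hY1
        show g ^ n * s₀ ^ ((0 : ZMod 2)).val = X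
        rw [show ((0 : ZMod 2)).val = 0 by decide, pow_zero, mul_one, hXg]
      · refine ⟨Multiplicative.ofAdd (n, (1 : ZMod 2)), ?_⟩
        have hY1 : X * (g ^ n)⁻¹ = s₀ := by
          apply Subtype.ext; apply Units.ext
          rw [show ((s₀ : GL (Fin 2) ℤ) : Matrix (Fin 2) (Fin 2) ℤ) = -1 from hs₀mat]
          exact h
        have hXg : X = s₀ * g ^ n := mul_inv_eq_iff_eq_mul.mp hY1
        show g ^ n * s₀ ^ ((1 : ZMod 2)).val = X
        rw [show ((1 : ZMod 2)).val = 1 by decide, pow_one, hXg, hcentral (g ^ n)]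
    exact ⟨(MulEquiv.ofBijective χ ⟨hinj, hsurj⟩).symm⟩
end

section
/- Let a, b, c ∈ ℤ with a ≠ 0 and b ≠ 0, and let A ∈ SL(3,ℤ) be the upper unitriangular matrix with rows (1, a, c), (0, 1, b), (0, 0, 1). Then a matrix B ∈ SL(3,ℤ) commutes with A if and only if there exist x, y, z ∈ ℤ with a·y − b·x = 0 such that B is the upper unitriangular matrix with rows (1, x, z), (0, 1, y), (0, 0, 1). Consequently, the centralizer of A in SL(3,ℤ) is isomorphic to ℤ². -/
open Matrix

namespace CentralizerGenericAux

/-- The upper unitriangular element of `SL(3,ℤ)` with entries `x, y, z`. -/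
def U (x y z : ℤ) : Matrix.SpecialLinearGroup (Fin 3) ℤ :=
  ⟨!![1, x, z; 0, 1, y; 0, 0, 1], by simp [Matrix.det_fin_three, Matrix.vecHead, Matrix.vecTail]⟩

lemma U_val (x y z : ℤ) : (U x y z).val = !![1, x, z; 0, 1, y; 0, 0, 1] := rfl

lemma U_mul (x y z x' y' z' : ℤ) :
    U x y z * U x' y' z' = U (x + x') (y + y') (z + z' + x * y') := by
  apply Subtype.ext
  simp only [Matrix.SpecialLinearGroup.coe_mul, U_val, Matrix.mul_fin_three]
  ext i j
  fin_cases i <;> fin_cases j <;> simp [Matrix.vecHead, Matrix.vecTail] <;> ring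

/-- Triangular numbers. -/
def T (t : ℤ) : ℤ := t * (t - 1) / 2

lemma two_T (t : ℤ) : 2 * T t = t * (t - 1) := by
  apply Int.mul_ediv_cancel'
  rcases Int.even_or_odd t with h | h
  · exact Dvd.dvd.mul_right h.two_dvd _
  · have h2 : Even (t - 1) := by simpa using h.sub_odd odd_one
    exact Dvd.dvd.mul_left h2.two_dvd _

lemma T_add (s t : ℤ) : T (s + t) = T s + T t + s * t := by
  apply mul_left_cancel₀ (two_ne_zero (α := ℤ))
  rw [mul_add, mul_add, two_T, two_T, two_T]
  ring

/-- Parametrization of solutions to `a*y - b*x = 0`. -/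
lemma param (a b : ℤ) (ha : a ≠ 0) (hb : b ≠ 0) :
    ∃ a' b' : ℤ, a' ≠ 0 ∧ b' ≠ 0 ∧
      ∀ x y : ℤ, (a * y - b * x = 0 ↔ ∃ t : ℤ, x = a' * t ∧ y = b' * t) := by
  set g : ℤ := (Int.gcd a b : ℤ) with hgdef
  have hgpos : 0 < Int.gcd a b := Int.gcd_pos_iff.mpr (Or.inl ha)
  have hgne : g ≠ 0 := by
    have : (0:ℤ) < g := by rw [hgdef]; exact_mod_cast hgpos
    exact this.ne'
  obtain ⟨a', ha'⟩ := Int.gcd_dvd_left (a := a) (b := b)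
  obtain ⟨b', hb'⟩ := Int.gcd_dvd_right (a := a) (b := b)
  have ha'0 : a' ≠ 0 := by rintro rfl; simp at ha'; exact ha ha'
  have hb'0 : b' ≠ 0 := by rintro rfl; simp at hb'; exact hb hb'
  have hda : a / g = a' := by rw [ha']; exact Int.mul_ediv_cancel_left _ hgne
  have hdb : b / g = b' := by rw [hb']; exact Int.mul_ediv_cancel_left _ hgne
  have hcop : IsCoprime a' b' := by
    rw [Int.isCoprime_iff_gcd_eq_one, ← hda, ← hdb]
    exact Int.gcd_div_gcd_div_gcd hgpos
  refine ⟨a', b', ha'0, hb'0, fun x y => ⟨fun h => ?_, ?_⟩⟩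
  · have key : a' * y = b' * x := by
      apply mul_left_cancel₀ hgne
      rw [← mul_assoc, ← ha', ← mul_assoc, ← hb']
      linarith
    have hdvd : a' ∣ x * b' := ⟨y, by linarith [key]⟩
    obtain ⟨t, ht⟩ := hcop.dvd_of_dvd_mul_right hdvd
    refine ⟨t, ht, ?_⟩
    apply mul_left_cancel₀ ha'0
    rw [key, ht]; ring
  · rintro ⟨t, rfl, rfl⟩
    calc a * (b' * t) - b * (a' * t)
        = ((Int.gcd a b : ℤ) * a') * (b' * t) - ((Int.gcd a b : ℤ) * b') * (a' * t) := by
          rw [← ha', ← hb']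
      _ = 0 := by ring

/-- The parametrizing homomorphism. -/
def psi (a' b' : ℤ) : Multiplicative (ℤ × ℤ) →* Matrix.SpecialLinearGroup (Fin 3) ℤ :=
  MonoidHom.mk' (fun p => U (a' * (Multiplicative.toAdd p).1) (b' * (Multiplicative.toAdd p).1)
      ((Multiplicative.toAdd p).2 + a' * b' * T (Multiplicative.toAdd p).1)) (by
    intro p q
    simp only [toAdd_mul, Prod.fst_add, Prod.snd_add, U_mul, T_add]
    congr 1 <;> ring)

lemma psi_apply (a' b' t z : ℤ) :
    psi a' b' (Multiplicative.ofAdd (t, z)) = U (a' * t) (b' * t) (z + a' * b' * T t) := rfl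

lemma psi_inj (a' b' : ℤ) (hb' : b' ≠ 0) : Function.Injective (psi a' b') := by
  intro p q h
  have hv : (psi a' b' p).val = (psi a' b' q).val := congrArg Subtype.val h
  have h12 : b' * (Multiplicative.toAdd p).1 = b' * (Multiplicative.toAdd q).1 := by
    have := congrFun (congrFun hv 1) 2
    simpa [psi, U_val, Matrix.vecHead, Matrix.vecTail] using this
  have ht : (Multiplicative.toAdd p).1 = (Multiplicative.toAdd q).1 :=
    mul_left_cancel₀ hb' h12
  have h02 : (Multiplicative.toAdd p).2 + a' * b' * T (Multiplicative.toAdd p).1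
      = (Multiplicative.toAdd q).2 + a' * b' * T (Multiplicative.toAdd q).1 := by
    have := congrFun (congrFun hv 0) 2
    simpa [psi, U_val, Matrix.vecHead, Matrix.vecTail] using this
  have hz : (Multiplicative.toAdd p).2 = (Multiplicative.toAdd q).2 := by
    rw [ht] at h02; linarith
  have : Multiplicative.toAdd p = Multiplicative.toAdd q := Prod.ext ht hz
  exact Multiplicative.toAdd.injective this

end CentralizerGenericAux

open CentralizerGenericAux in
/-- Let `A ∈ SL(3,ℤ)` be the unitriangular matrix with rows `(1,a,c), (0,1,b), (0,0,1)`
where `a ≠ 0` and `b ≠ 0`.  Then `B ∈ SL(3,ℤ)` commutes with `A` iff `B` is unitriangular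
with rows `(1,x,z),(0,1,y),(0,0,1)` satisfying `a·y - b·x = 0`; consequently the
centralizer of `A` in `SL(3,ℤ)` is isomorphic to `ℤ²`. -/
theorem centralizer_generic_unitriangular
    (a b c : ℤ) (ha : a ≠ 0) (hb : b ≠ 0)
    (A : Matrix.SpecialLinearGroup (Fin 3) ℤ)
    (hA : A.val = !![1, a, c; 0, 1, b; 0, 0, 1]) :
    (∀ B : Matrix.SpecialLinearGroup (Fin 3) ℤ,
        B * A = A * B ↔
          ∃ x y z : ℤ, a * y - b * x = 0 ∧ B.val = !![1, x, z; 0, 1, y; 0, 0, 1]) ∧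
    Nonempty (↥(Subgroup.centralizer ({A} : Set (Matrix.SpecialLinearGroup (Fin 3) ℤ))) ≃*
      Multiplicative (ℤ × ℤ)) := by
  have part1 : ∀ B : Matrix.SpecialLinearGroup (Fin 3) ℤ,
      B * A = A * B ↔
        ∃ x y z : ℤ, a * y - b * x = 0 ∧ B.val = !![1, x, z; 0, 1, y; 0, 0, 1] := by
    intro B
    constructor
    · intro h
      have hm : B.val * A.val = A.val * B.val := by
        have := congrArg Subtype.val h
        simpa [Matrix.SpecialLinearGroup.coe_mul] using this
      have e10 := congrFun (congrFun hm 1) 0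
      have e22 := congrFun (congrFun hm 2) 2
      have e11 := congrFun (congrFun hm 1) 1
      have e01 := congrFun (congrFun hm 0) 1
      have e12 := congrFun (congrFun hm 1) 2
      have e02 := congrFun (congrFun hm 0) 2
      simp only [hA, Matrix.mul_apply, Fin.sum_univ_three] at e10 e22 e11 e01 e12 e02
      simp [Matrix.vecHead, Matrix.vecTail] at e10 e22 e11 e01 e12 e02
      have h20 : B.val 2 0 = 0 := e10.resolve_left hb
      have h21 : B.val 2 1 = 0 := by
        rw [h20] at e22
        rcases mul_eq_zero.mp (show b * B.val 2 1 = 0 by linarith) with h | h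
        · exact absurd h hb
        · exact h
      have h10 : B.val 1 0 = 0 := by
        rw [h21] at e11
        rcases mul_eq_zero.mp (show a * B.val 1 0 = 0 by linarith) with h | h
        · exact absurd h ha
        · exact h
      have hd1 : B.val 0 0 = B.val 1 1 := by
        rw [h21] at e01
        have : a * B.val 0 0 = a * B.val 1 1 := by linarith
        exact mul_left_cancel₀ ha this
      have hd2 : B.val 1 1 = B.val 2 2 := by
        rw [h10] at e12
        have : b * B.val 1 1 = b * B.val 2 2 := by linarith
        exact mul_left_cancel₀ hb this
      have hdet : B.val.det = 1 := B.2
      rw [Matrix.det_fin_three] at hdet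
      rw [h20, h21, h10, ← hd1, ← hd2, ← hd1] at hdet
      have h00 : B.val 0 0 = 1 := by nlinarith [sq_nonneg (B.val 0 0 - 1), sq_nonneg (B.val 0 0 + 1), sq_nonneg (B.val 0 0)]
      have h11 : B.val 1 1 = 1 := by rw [← hd1]; exact h00
      have h22 : B.val 2 2 = 1 := by rw [← hd2]; exact h11
      refine ⟨B.val 0 1, B.val 1 2, B.val 0 2, ?_, ?_⟩
      · rw [h00, h22] at e02
        linarith
      · rw [Matrix.eta_fin_three B.val, h00, h10, h20, h11, h21, h22]
        simp
    · rintro ⟨x, y, z, hxy, hB⟩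
      apply Subtype.ext
      simp only [Matrix.SpecialLinearGroup.coe_mul, hB, hA, Matrix.mul_fin_three]
      ext i j
      fin_cases i <;> fin_cases j <;> simp [Matrix.vecHead, Matrix.vecTail] <;> linarith
  refine ⟨part1, ?_⟩
  obtain ⟨a', b', ha', hb', hiff⟩ := param a b ha hb
  have hrange : (psi a' b').range = Subgroup.centralizer ({A} : Set _) := by
    ext B
    rw [Subgroup.mem_centralizer_singleton_iff]
    constructor
    · rintro ⟨p, rfl⟩
      refine (part1 _).mpr ⟨a' * (Multiplicative.toAdd p).1, b' * (Multiplicative.toAdd p).1,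
        (Multiplicative.toAdd p).2 + a' * b' * T (Multiplicative.toAdd p).1,
        (hiff _ _).mpr ⟨(Multiplicative.toAdd p).1, rfl, rfl⟩, ?_⟩
      rfl
    · intro h
      obtain ⟨x, y, z, hxy, hB⟩ := (part1 B).mp h
      obtain ⟨t, hx, hy⟩ := (hiff x y).mp hxy
      refine ⟨Multiplicative.ofAdd (t, z - a' * b' * T t), ?_⟩
      apply Subtype.ext
      rw [psi_apply, U_val, hB, hx, hy]
      congr 1
      ring
  exact ⟨(MulEquiv.subgroupCongr hrange).symm.trans (MonoidHom.ofInjective (psi_inj a' b' hb')).symm⟩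
end
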